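/- arXiv:2502.06506 — 9 statements merged into one kernel-verified Lean document; each statement's English description precedes it below -/
import Mathlib

section
/- For every natural number n ≥ 1, every real γ ≥ 1, and real numbers x₁ ≥ x₂ ≥ ⋯ ≥ xₙ ≥ 0, the alternating sum satisfies (∑_{i=1}^{n} (-1)^{i-1} xᵢ)^γ ≤ ∑_{i=1}^{n} (-1)^{i-1} xᵢ^γ. -/
open Finset

lemma aux_mono (γ : ℝ) (hγ : 1 ≤ γ) (c : ℝ) (hc : 0 ≤ c) {s t : ℝ} (hs : 0 ≤ s)
    (hst : s ≤ t) : (s + c) ^ γ - s ^ γ ≤ (t + c) ^ γ - t ^ γ := by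
  have hd : ∀ u : ℝ, HasDerivAt (fun v => (v + c) ^ γ - v ^ γ)
      (γ * (u + c) ^ (γ - 1) * 1 - γ * u ^ (γ - 1)) u := by
    intro u
    exact ((Real.hasDerivAt_rpow_const (Or.inr hγ)).comp u
      ((hasDerivAt_id u).add_const c)).sub (Real.hasDerivAt_rpow_const (Or.inr hγ))
  have hmono : MonotoneOn (fun v => (v + c) ^ γ - v ^ γ) (Set.Ici 0) := by
    apply monotoneOn_of_deriv_nonneg (convex_Ici 0)
    · exact fun u _ => ((hd u).differentiableAt).continuousAt.continuousWithinAt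
    · exact fun u _ => ((hd u).differentiableAt).differentiableWithinAt
    · intro u hu
      rw [interior_Ici] at hu
      rw [(hd u).deriv]
      have h1 : u ^ (γ - 1) ≤ (u + c) ^ (γ - 1) :=
        Real.rpow_le_rpow (le_of_lt hu) (by linarith) (by linarith)
      nlinarith
  exact hmono hs (hs.trans hst) hst

lemma alt_identity (m : ℕ) (f : ℕ → ℝ) :
    ∑ i ∈ range (m + 2), (-1 : ℝ) ^ i * f i
      = f 0 - f 1 + ∑ i ∈ range m, (-1 : ℝ) ^ i * f (i + 2) := by
  rw [Finset.sum_range_succ', Finset.sum_range_succ']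
  simp [pow_succ]
  ring

lemma alt_bounds : ∀ (n : ℕ) (x : ℕ → ℝ), (∀ i, x (i + 1) ≤ x i) → (∀ i, 0 ≤ x i) →
    0 ≤ ∑ i ∈ range n, (-1 : ℝ) ^ i * x i ∧ ∑ i ∈ range n, (-1 : ℝ) ^ i * x i ≤ x 0 := by
  intro n
  induction n using Nat.strong_induction_on with
  | _ n ih =>
    match n with
    | 0 => intro x hx h0; simpa using h0 0
    | 1 => intro x hx h0; simpa using h0 0
    | (m + 2) =>
      intro x hx h0
      obtain ⟨hl, hu⟩ := ih m (by omega) (fun i => x (i + 2)) (fun i => hx (i + 2))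
        (fun i => h0 (i + 2))
      rw [alt_identity m x]
      have h1 := hx 0
      have h2 := hx 1
      constructor <;> nlinarith

lemma alt_main (γ : ℝ) (hγ : 1 ≤ γ) : ∀ (n : ℕ) (x : ℕ → ℝ),
    (∀ i, x (i + 1) ≤ x i) → (∀ i, 0 ≤ x i) →
    (∑ i ∈ range n, (-1 : ℝ) ^ i * x i) ^ γ ≤ ∑ i ∈ range n, (-1 : ℝ) ^ i * x i ^ γ := by
  intro n
  induction n using Nat.strong_induction_on with
  | _ n ih =>
    match n with
    | 0 =>
      intro x hx h0
      simp [Real.zero_rpow (by linarith : γ ≠ 0)]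
    | 1 =>
      intro x hx h0
      simp
    | (m + 2) =>
      intro x hx h0
      have IH := ih m (by omega) (fun i => x (i + 2)) (fun i => hx (i + 2))
        (fun i => h0 (i + 2))
      obtain ⟨hl, hu⟩ := alt_bounds m (fun i => x (i + 2)) (fun i => hx (i + 2))
        (fun i => h0 (i + 2))
      set T := ∑ i ∈ range m, (-1 : ℝ) ^ i * x (i + 2) with hT
      rw [alt_identity m x, alt_identity m (fun i => x i ^ γ)]
      -- x 0 - x 1 + T = T + (x 0 - x 1)
      have hc : (0:ℝ) ≤ x 0 - x 1 := by linarith [hx 0]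
      have hT1 : T ≤ x 1 := hu.trans (hx 1)
      have key : (T + (x 0 - x 1)) ^ γ - T ^ γ ≤ (x 1 + (x 0 - x 1)) ^ γ - x 1 ^ γ :=
        aux_mono γ hγ _ hc hl hT1
      have e1 : x 1 + (x 0 - x 1) = x 0 := by ring
      rw [e1] at key
      have e2 : x 0 - x 1 + T = T + (x 0 - x 1) := by ring
      rw [e2]
      linarith

/-- For `n ≥ 1`, `γ ≥ 1` and reals `x₁ ≥ x₂ ≥ ⋯ ≥ xₙ ≥ 0`, the alternating sum
satisfies `(∑ (-1)^(i-1) xᵢ) ^ γ ≤ ∑ (-1)^(i-1) xᵢ ^ γ`. -/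
theorem alternating_sum_rpow_le (n : ℕ) (hn : 1 ≤ n) (γ : ℝ) (hγ : 1 ≤ γ)
    (x : Fin n → ℝ) (hanti : ∀ i j : Fin n, i ≤ j → x j ≤ x i)
    (hnonneg : ∀ i, 0 ≤ x i) :
    (∑ i : Fin n, (-1 : ℝ) ^ (i : ℕ) * x i) ^ γ ≤
      ∑ i : Fin n, (-1 : ℝ) ^ (i : ℕ) * x i ^ γ := by
  set y : ℕ → ℝ := fun i => if h : i < n then x ⟨i, h⟩ else 0 with hy
  have hyx : ∀ i, y (i + 1) ≤ y i := by
    intro i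
    simp only [hy]
    split_ifs with h1 h2 h2
    · exact hanti ⟨i, h2⟩ ⟨i + 1, h1⟩ (by simp)
    · omega
    · exact hnonneg _
    · exact le_refl 0
  have hyn : ∀ i, 0 ≤ y i := by
    intro i
    simp only [hy]
    split_ifs with h
    · exact hnonneg _
    · exact le_refl 0
  have h1 : ∑ i : Fin n, (-1 : ℝ) ^ (i : ℕ) * x i = ∑ i ∈ range n, (-1 : ℝ) ^ i * y i := by
    rw [← Fin.sum_univ_eq_sum_range (fun i => (-1 : ℝ) ^ i * y i) n]
    refine Finset.sum_congr rfl fun i _ => ?_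
    simp [hy, i.isLt]
  have h2 : ∑ i : Fin n, (-1 : ℝ) ^ (i : ℕ) * x i ^ γ
      = ∑ i ∈ range n, (-1 : ℝ) ^ i * y i ^ γ := by
    rw [← Fin.sum_univ_eq_sum_range (fun i => (-1 : ℝ) ^ i * y i ^ γ) n]
    refine Finset.sum_congr rfl fun i _ => ?_
    simp [hy, i.isLt]
  rw [h1, h2]
  exact alt_main γ hγ n y hyx hyn
end

section
/- Let p ≥ 1 and let E ⊆ (0, ∞) be a measurable set of finite Lebesgue measure. Then ∫₀^∞ χ_E(t) dt ≤ p^{1/p} (∫₀^∞ χ_E(t) t^{p-1} dt)^{1/p}. -/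
open MeasureTheory Set ENNReal

/-- For `p ≥ 1` and a measurable set `E ⊆ (0, ∞)` of finite Lebesgue measure,
`∫₀^∞ χ_E(t) dt ≤ p^{1/p} (∫₀^∞ χ_E(t) t^{p-1} dt)^{1/p}`. -/
theorem indicator_lintegral_le_rpow (p : ℝ) (hp : 1 ≤ p) (E : Set ℝ)
    (hE : MeasurableSet E) (hE' : E ⊆ Ioi 0) (hfin : volume E < ⊤) :
    (∫⁻ t in Ioi (0 : ℝ), E.indicator (fun _ => (1 : ℝ≥0∞)) t) ≤
      ENNReal.ofReal (p ^ (1 / p)) *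
        (∫⁻ t in Ioi (0 : ℝ),
            E.indicator (fun _ => (1 : ℝ≥0∞)) t * ENNReal.ofReal (t ^ (p - 1))) ^ (1 / p) := by
  have hp0 : (0:ℝ) < p := lt_of_lt_of_le one_pos hp
  set f : ℝ → ℝ≥0∞ := fun t => ENNReal.ofReal (t ^ (p-1)) with hf
  have hfmeas : Measurable f := by
    apply ENNReal.measurable_ofReal.comp
    fun_prop
  set m : ℝ := (volume E).toReal with hm
  have hm0 : 0 ≤ m := ENNReal.toReal_nonneg
  have hvol : volume E = ENNReal.ofReal m := (ENNReal.ofReal_toReal hfin.ne).symm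
  -- LHS equals volume E
  have hLHS : (∫⁻ t in Ioi (0 : ℝ), E.indicator (fun _ => (1 : ℝ≥0∞)) t) = volume E := by
    rw [lintegral_indicator hE, setLIntegral_one, Measure.restrict_apply hE,
      inter_eq_self_of_subset_left hE']
  -- RHS integral equals ∫⁻ t in E, f t
  have hRHS : (∫⁻ t in Ioi (0 : ℝ),
      E.indicator (fun _ => (1 : ℝ≥0∞)) t * ENNReal.ofReal (t ^ (p - 1)))
      = ∫⁻ t in E, f t := by
    have : ∀ t : ℝ, E.indicator (fun _ => (1 : ℝ≥0∞)) t * ENNReal.ofReal (t ^ (p - 1))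
        = E.indicator f t := by
      intro t
      by_cases ht : t ∈ E <;> simp [ht, hf]
    simp_rw [this]
    rw [lintegral_indicator hE, Measure.restrict_restrict hE,
      inter_eq_self_of_subset_left hE']
  -- the integral of f over Ioc 0 m
  have hIoc : ∫⁻ t in Ioc 0 m, f t = ENNReal.ofReal (m ^ p / p) := by
    have hint : IntegrableOn (fun t : ℝ => t ^ (p-1)) (Ioc 0 m) :=
      (intervalIntegral.intervalIntegrable_rpow (r := p-1) (a := 0) (b := m)
        (Or.inl (by linarith))).1
    rw [← ofReal_integral_eq_lintegral_ofReal hint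
      (ae_restrict_of_forall_mem measurableSet_Ioc fun x hx =>
        Real.rpow_nonneg hx.1.le _)]
    congr 1
    rw [← intervalIntegral.integral_of_le hm0,
      integral_rpow (Or.inl (by linarith))]
    rw [sub_add_cancel, Real.zero_rpow hp0.ne', sub_zero]
  -- key inequality : ofReal (m^p/p) ≤ ∫⁻ t in E, f t
  have key : ENNReal.ofReal (m ^ p / p) ≤ ∫⁻ t in E, f t := by
    have hmeasE : volume (E ∩ Ioc 0 m) + volume (E \ Ioc 0 m) = ENNReal.ofReal m := by
      rw [measure_inter_add_diff E measurableSet_Ioc, ← hvol]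
    have hmeasI : volume (Ioc 0 m ∩ E) + volume (Ioc 0 m \ E) = ENNReal.ofReal m := by
      rw [measure_inter_add_diff _ hE, Real.volume_Ioc, sub_zero]
    have hBC : volume (E \ Ioc 0 m) = volume (Ioc 0 m \ E) := by
      have hfinA : volume (E ∩ Ioc 0 m) ≠ ⊤ :=
        (lt_of_le_of_lt (measure_mono inter_subset_left) hfin).ne
      rw [inter_comm] at hmeasI
      have := hmeasE.trans hmeasI.symm
      exact (ENNReal.add_right_inj hfinA).mp this
    have hB : ENNReal.ofReal (m ^ (p-1)) * volume (E \ Ioc 0 m)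
        ≤ ∫⁻ t in E \ Ioc 0 m, f t := by
      rw [← setLIntegral_const]
      refine setLIntegral_mono hfmeas fun x hx => ?_
      have hx0 : 0 < x := hE' hx.1
      have hxm : m ≤ x := by
        by_contra h
        exact hx.2 ⟨hx0, by linarith⟩
      exact ENNReal.ofReal_le_ofReal
        (Real.rpow_le_rpow hm0 hxm (by linarith))
    have hC : ∫⁻ t in Ioc 0 m \ E, f t
        ≤ ENNReal.ofReal (m ^ (p-1)) * volume (Ioc 0 m \ E) := by
      rw [← setLIntegral_const]
      refine setLIntegral_mono (measurable_const) fun x hx => ?_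
      exact ENNReal.ofReal_le_ofReal
        (Real.rpow_le_rpow hx.1.1.le hx.1.2 (by linarith))
    have hBC' : (∫⁻ t in Ioc 0 m \ E, f t) ≤ ∫⁻ t in E \ Ioc 0 m, f t := by
      refine hC.trans ?_
      rw [← hBC]
      exact hB
    calc ENNReal.ofReal (m ^ p / p) = ∫⁻ t in Ioc 0 m, f t := hIoc.symm
      _ = (∫⁻ t in Ioc 0 m ∩ E, f t) + ∫⁻ t in Ioc 0 m \ E, f t :=
          (lintegral_inter_add_diff f (Ioc 0 m) hE).symm
      _ ≤ (∫⁻ t in Ioc 0 m ∩ E, f t) + ∫⁻ t in E \ Ioc 0 m, f t := add_le_add_right hBC' _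
      _ = (∫⁻ t in E ∩ Ioc 0 m, f t) + ∫⁻ t in E \ Ioc 0 m, f t := by rw [inter_comm]
      _ = ∫⁻ t in E, f t :=
          lintegral_inter_add_diff f E (measurableSet_Ioc (a := (0:ℝ)) (b := m))
  -- conclude
  rw [hLHS, hRHS, hvol]
  have hppos : (0:ℝ) < p ^ (1/p) := Real.rpow_pos_of_pos hp0 _
  calc ENNReal.ofReal m
      = ENNReal.ofReal (p ^ (1/p)) * ENNReal.ofReal ((m ^ p / p) ^ (1/p)) := by
        rw [← ENNReal.ofReal_mul hppos.le]
        congr 1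
        rw [Real.div_rpow (Real.rpow_nonneg hm0 _) hp0.le,
          ← Real.rpow_mul hm0, mul_one_div_cancel hp0.ne', Real.rpow_one]
        field_simp
    _ = ENNReal.ofReal (p ^ (1/p)) * (ENNReal.ofReal (m ^ p / p)) ^ (1/p) := by
        rw [ENNReal.ofReal_rpow_of_nonneg
          (div_nonneg (Real.rpow_nonneg hm0 _) hp0.le) (by positivity)]
    _ ≤ ENNReal.ofReal (p ^ (1/p)) * (∫⁻ t in E, f t) ^ (1/p) :=
        mul_le_mul_right (ENNReal.rpow_le_rpow key (by positivity)) _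
end

section
/- Let p ≥ 1, γ > 0, and let E ⊆ (0, ∞) be a measurable set of finite Lebesgue measure. Then ∫₀^∞ χ_E(t) t^{γ-1} dt ≤ p^{1/p} γ^{-1/p'} (∫₀^∞ χ_E(t) t^{pγ - 1} dt)^{1/p}, where 1/p + 1/p' = 1. -/
open MeasureTheory Set ENNReal

lemma aux_lint_Ioc (c a : ℝ) (hc : 0 < c) (ha : 0 < a) :
    ∫⁻ t in Ioc (0:ℝ) a, ENNReal.ofReal (t ^ (c-1)) = ENNReal.ofReal (a ^ c / c) := by
  have hint : IntegrableOn (fun t : ℝ => t ^ (c-1)) (Ioc 0 a) :=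
    (intervalIntegral.intervalIntegrable_rpow' (a := 0) (b := a)
      (r := c - 1) (by linarith)).1
  have hnn : 0 ≤ᵐ[volume.restrict (Ioc (0:ℝ) a)] fun t : ℝ => t ^ (c-1) := by
    filter_upwards [ae_restrict_mem measurableSet_Ioc] with t ht
    exact Real.rpow_nonneg ht.1.le _
  rw [← ofReal_integral_eq_lintegral_ofReal hint hnn]
  congr 1
  rw [← intervalIntegral.integral_of_le ha.le]
  rw [integral_rpow (Or.inl (by linarith))]
  rw [Real.zero_rpow (by linarith : c - 1 + 1 ≠ 0)]
  ring_nf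

lemma aux_reduce (c : ℝ) (E : Set ℝ) (hE : MeasurableSet E) (hE' : E ⊆ Ioi 0) :
    (∫⁻ t in Ioi (0 : ℝ),
        E.indicator (fun _ => (1 : ℝ≥0∞)) t * ENNReal.ofReal (t ^ (c - 1)))
      = ∫⁻ t in E, ENNReal.ofReal (t ^ (c - 1)) := by
  have h : ∀ t : ℝ, E.indicator (fun _ => (1:ℝ≥0∞)) t * ENNReal.ofReal (t ^ (c-1))
      = E.indicator (fun t => ENNReal.ofReal (t ^ (c-1))) t := by
    intro t; by_cases ht : t ∈ E <;> simp [ht]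
  simp_rw [h]
  rw [lintegral_indicator hE, Measure.restrict_restrict hE,
    inter_eq_self_of_subset_left hE']

/-- For `p ≥ 1`, `γ > 0` and a measurable set `E ⊆ (0, ∞)` of finite Lebesgue measure,
`∫₀^∞ χ_E(t) t^{γ-1} dt ≤ p^{1/p} γ^{-1/p'} (∫₀^∞ χ_E(t) t^{pγ-1} dt)^{1/p}`,
where `1/p + 1/p' = 1`. -/
theorem indicator_rpow_lintegral_le_rpow (p γ : ℝ) (hp : 1 ≤ p) (hγ : 0 < γ)
    (E : Set ℝ) (hE : MeasurableSet E) (hE' : E ⊆ Ioi 0) (hfin : volume E < ⊤) :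
    (∫⁻ t in Ioi (0 : ℝ),
        E.indicator (fun _ => (1 : ℝ≥0∞)) t * ENNReal.ofReal (t ^ (γ - 1))) ≤
      ENNReal.ofReal (p ^ (1 / p) * γ ^ (-(1 - 1 / p))) *
        (∫⁻ t in Ioi (0 : ℝ),
            E.indicator (fun _ => (1 : ℝ≥0∞)) t * ENNReal.ofReal (t ^ (p * γ - 1))) ^ (1 / p) := by
  have hp0 : 0 < p := lt_of_lt_of_le one_pos hp
  have hpγ : 0 < p * γ := mul_pos hp0 hγ
  have hC : 0 < p ^ (1 / p) * γ ^ (-(1 - 1 / p)) :=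
    mul_pos (Real.rpow_pos_of_pos hp0 _) (Real.rpow_pos_of_pos hγ _)
  rw [aux_reduce γ E hE hE', aux_reduce (p * γ) E hE hE']
  set I := ∫⁻ t in E, ENNReal.ofReal (t ^ (p * γ - 1)) with hIdef
  -- trivial case: E is null
  by_cases hE0 : volume E = 0
  · rw [Measure.restrict_eq_zero.mpr hE0, lintegral_zero_measure]
    exact zero_le
  -- trivial case: I = ⊤
  by_cases hItop : I = ⊤
  · rw [hItop, ENNReal.top_rpow_of_pos (by positivity),
      ENNReal.mul_top (ne_of_gt (ENNReal.ofReal_pos.mpr hC))]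
    exact le_top
  -- I is positive
  have hmeas : Measurable fun t : ℝ => ENNReal.ofReal (t ^ (p * γ - 1)) :=
    by fun_prop
  have hI0 : I ≠ 0 := by
    intro h0
    have := (lintegral_eq_zero_iff hmeas).mp h0
    have hFalse : ∀ᵐ t ∂(volume.restrict E), False := by
      filter_upwards [this, ae_restrict_mem hE] with t h1 h2
      have ht : (0:ℝ) < t := hE' h2
      have : (0:ℝ) < t ^ (p * γ - 1) := Real.rpow_pos_of_pos ht _
      simp only [Pi.zero_apply] at h1
      exact absurd h1 (ne_of_gt (ENNReal.ofReal_pos.mpr this))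
    have : volume.restrict E univ = 0 := by
      simpa [ae_iff] using hFalse
    rw [Measure.restrict_apply_univ] at this
    exact hE0 this
  set Ireal := I.toReal with hIrdef
  have hIreal : 0 < Ireal := ENNReal.toReal_pos hI0 hItop
  have hIofReal : ENNReal.ofReal Ireal = I := ENNReal.ofReal_toReal hItop
  set a := (p * γ * Ireal) ^ (1 / (p * γ)) with hadef
  have hpgI : 0 < p * γ * Ireal := mul_pos hpγ hIreal
  have ha : 0 < a := Real.rpow_pos_of_pos hpgI _
  have hapg : a ^ (p * γ) = p * γ * Ireal := by
    rw [hadef, ← Real.rpow_mul hpgI.le, one_div, inv_mul_cancel₀ (ne_of_gt hpγ),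
      Real.rpow_one]
  -- key inequality
  have key : (∫⁻ t in E, ENNReal.ofReal (t ^ (γ - 1))) ≤ ENNReal.ofReal (a ^ γ / γ) := by
    have hexp : γ - p * γ ≤ 0 := by nlinarith
    set S1 := E ∩ Ioc 0 a with hS1
    set S2 := E ∩ Ioi a with hS2
    set T := Ioc 0 a \ E with hT
    have hS2m : MeasurableSet S2 := hE.inter measurableSet_Ioi
    have hTm : MeasurableSet T := measurableSet_Ioc.diff hE
    have hdisj : Disjoint S1 S2 :=
      Disjoint.mono inter_subset_right inter_subset_right (Ioc_disjoint_Ioi le_rfl)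
    have hE_eq : S1 ∪ S2 = E := by
      rw [hS1, hS2, ← inter_union_distrib_left, Ioc_union_Ioi_eq_Ioi ha.le,
        inter_eq_self_of_subset_left hE']
    have hsplitE : ∀ f : ℝ → ℝ≥0∞,
        (∫⁻ t in E, f t) = (∫⁻ t in S1, f t) + ∫⁻ t in S2, f t := by
      intro f
      rw [← hE_eq, lintegral_union hS2m hdisj]
    have hdisj2 : Disjoint S1 T := disjoint_sdiff_right.mono_left inter_subset_left
    have hIoc_eq : S1 ∪ T = Ioc 0 a := by
      rw [hS1, hT, inter_comm, inter_union_diff]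
    have hsplitIoc : ∀ f : ℝ → ℝ≥0∞,
        (∫⁻ t in Ioc (0:ℝ) a, f t) = (∫⁻ t in S1, f t) + ∫⁻ t in T, f t := by
      intro f
      rw [← hIoc_eq, lintegral_union hTm hdisj2]
    have step1 : (∫⁻ t in S2, ENNReal.ofReal (t ^ (γ - 1)))
        ≤ ENNReal.ofReal (a ^ (γ - p*γ)) * ∫⁻ t in S2, ENNReal.ofReal (t ^ (p*γ - 1)) := by
      rw [← lintegral_const_mul' _ _ ofReal_ne_top]
      refine setLIntegral_mono (by fun_prop) ?_
      intro t ht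
      have ht' : a < t := ht.2
      have ht0 : 0 < t := ha.trans ht'
      rw [← ENNReal.ofReal_mul (Real.rpow_nonneg ha.le _)]
      apply ENNReal.ofReal_le_ofReal
      calc t ^ (γ - 1) = t ^ (γ - p*γ) * t ^ (p*γ - 1) := by
            rw [← Real.rpow_add ht0]; ring_nf
        _ ≤ a ^ (γ - p*γ) * t ^ (p*γ - 1) :=
            mul_le_mul_of_nonneg_right
              (Real.rpow_le_rpow_of_nonpos ha ht'.le hexp)
              (Real.rpow_nonneg ht0.le _)
    have step2 : ENNReal.ofReal (a ^ (γ - p*γ)) * (∫⁻ t in T, ENNReal.ofReal (t ^ (p*γ - 1)))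
        ≤ ∫⁻ t in T, ENNReal.ofReal (t ^ (γ - 1)) := by
      rw [← lintegral_const_mul' _ _ ofReal_ne_top]
      refine setLIntegral_mono (by fun_prop) ?_
      intro t ht
      have ht0 : 0 < t := ht.1.1
      have hta : t ≤ a := ht.1.2
      rw [← ENNReal.ofReal_mul (Real.rpow_nonneg ha.le _)]
      apply ENNReal.ofReal_le_ofReal
      calc a ^ (γ - p*γ) * t ^ (p*γ - 1)
          ≤ t ^ (γ - p*γ) * t ^ (p*γ - 1) :=
            mul_le_mul_of_nonneg_right
              (Real.rpow_le_rpow_of_nonpos ht0 hta hexp)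
              (Real.rpow_nonneg ht0.le _)
        _ = t ^ (γ - 1) := by rw [← Real.rpow_add ht0]; ring_nf
    have hS1fin : (∫⁻ t in S1, ENNReal.ofReal (t ^ (p*γ - 1))) ≠ ⊤ := by
      refine ne_top_of_le_ne_top hItop ?_
      exact lintegral_mono_set inter_subset_left
    have hIocI : (∫⁻ t in Ioc (0:ℝ) a, ENNReal.ofReal (t ^ (p*γ - 1))) = I := by
      rw [aux_lint_Ioc (p*γ) a hpγ ha, hapg, mul_comm (p*γ) Ireal, mul_div_assoc,
        div_self (ne_of_gt hpγ), mul_one, hIofReal]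
    have step3 : (∫⁻ t in S2, ENNReal.ofReal (t ^ (p*γ - 1)))
        = ∫⁻ t in T, ENNReal.ofReal (t ^ (p*γ - 1)) := by
      have h1 : (∫⁻ t in S1, ENNReal.ofReal (t ^ (p*γ - 1)))
            + (∫⁻ t in S2, ENNReal.ofReal (t ^ (p*γ - 1)))
          = (∫⁻ t in S1, ENNReal.ofReal (t ^ (p*γ - 1)))
            + ∫⁻ t in T, ENNReal.ofReal (t ^ (p*γ - 1)) := by
        rw [← hsplitE (fun t => ENNReal.ofReal (t ^ (p*γ - 1))),
          ← hsplitIoc (fun t => ENNReal.ofReal (t ^ (p*γ - 1))), hIocI, ← hIdef]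
      exact (ENNReal.add_right_inj hS1fin).mp h1
    calc (∫⁻ t in E, ENNReal.ofReal (t ^ (γ - 1)))
        = (∫⁻ t in S1, ENNReal.ofReal (t ^ (γ - 1)))
          + ∫⁻ t in S2, ENNReal.ofReal (t ^ (γ - 1)) := hsplitE _
      _ ≤ (∫⁻ t in S1, ENNReal.ofReal (t ^ (γ - 1)))
          + ENNReal.ofReal (a ^ (γ - p*γ)) * ∫⁻ t in S2, ENNReal.ofReal (t ^ (p*γ - 1)) :=
          add_le_add_right step1 _
      _ = (∫⁻ t in S1, ENNReal.ofReal (t ^ (γ - 1)))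
          + ENNReal.ofReal (a ^ (γ - p*γ)) * ∫⁻ t in T, ENNReal.ofReal (t ^ (p*γ - 1)) := by
          rw [step3]
      _ ≤ (∫⁻ t in S1, ENNReal.ofReal (t ^ (γ - 1)))
          + ∫⁻ t in T, ENNReal.ofReal (t ^ (γ - 1)) := add_le_add_right step2 _
      _ = ∫⁻ t in Ioc (0:ℝ) a, ENNReal.ofReal (t ^ (γ - 1)) := (hsplitIoc _).symm
      _ = ENNReal.ofReal (a ^ γ / γ) := aux_lint_Ioc γ a hγ ha
  -- final arithmetic
  have hfinal : ENNReal.ofReal (a ^ γ / γ)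
      = ENNReal.ofReal (p ^ (1 / p) * γ ^ (-(1 - 1 / p))) * I ^ (1 / p) := by
    have haγ : a ^ γ = p ^ (1/p) * γ ^ (1/p) * Ireal ^ (1/p) := by
      rw [hadef, ← Real.rpow_mul hpgI.le]
      have h1 : 1 / (p*γ) * γ = 1/p := by field_simp
      rw [h1, Real.mul_rpow (mul_pos hp0 hγ).le hIreal.le, Real.mul_rpow hp0.le hγ.le]
    have hCγ : γ ^ (-(1 - 1/p)) = γ ^ (1/p) / γ := by
      rw [show -(1 - 1/p) = 1/p + (-1) by ring, Real.rpow_add hγ, Real.rpow_neg_one]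
      ring
    have h2 : a ^ γ / γ = (p ^ (1/p) * γ ^ (-(1 - 1/p))) * Ireal ^ (1/p) := by
      rw [haγ, hCγ]; ring
    rw [h2, ENNReal.ofReal_mul hC.le,
      ← ENNReal.ofReal_rpow_of_nonneg hIreal.le (by positivity), hIofReal]
  exact key.trans (le_of_eq hfinal)
end

section
/- Let γ > 0, α ∈ ℝ, and p ≥ max{1, 1 - α}. There exists a constant C > 0, depending only on p, γ, α, such that for every measurable set E ⊆ (0, ∞) of finite measure, ∫₀^∞ χ_E(t) (sinh t)^γ dt ≤ C (∫₀^∞ χ_E(t) (cosh t)^α (sinh t)^{pγ - α} dt)^{1/p}. -/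
open MeasureTheory Set ENNReal

lemma sinh_rpow_le_aux (γ α p : ℝ) (hγ : 0 < γ) (hp1 : 1 ≤ p) {s t : ℝ}
    (hs : 0 < s) (hst : s ≤ t) :
    Real.sinh t ^ γ ≤
      (Real.sinh s ^ ((1 - p) * γ) * max 1 ((Real.sinh s / Real.cosh s) ^ α)) *
        (Real.cosh t ^ α * Real.sinh t ^ (p * γ - α)) := by
  have hbt : 0 < Real.sinh t := Real.sinh_pos_iff.mpr (hs.trans_le hst)
  have hbs : 0 < Real.sinh s := Real.sinh_pos_iff.mpr hs
  have hct : 0 < Real.cosh t := Real.cosh_pos t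
  have hcs : 0 < Real.cosh s := Real.cosh_pos s
  have hcta : 0 < Real.cosh t ^ α := Real.rpow_pos_of_pos hct α
  have key : Real.sinh t ^ γ =
      (Real.sinh t ^ ((1 - p) * γ) * (Real.sinh t / Real.cosh t) ^ α) *
        (Real.cosh t ^ α * Real.sinh t ^ (p * γ - α)) := by
    rw [Real.div_rpow hbt.le hct.le]
    field_simp
    rw [← Real.rpow_add hbt, ← Real.rpow_add hbt]
    congr 1
    ring
  rw [key]
  have f1 : Real.sinh t ^ ((1 - p) * γ) ≤ Real.sinh s ^ ((1 - p) * γ) :=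
    Real.rpow_le_rpow_of_nonpos hbs (Real.sinh_le_sinh.mpr hst)
      (mul_nonpos_iff.mpr (Or.inr ⟨by linarith, hγ.le⟩))
  have ftanh : Real.sinh s / Real.cosh s ≤ Real.sinh t / Real.cosh t := by
    rw [div_le_div_iff₀ hcs hct]
    nlinarith [Real.sinh_sub t s, Real.sinh_nonneg_iff.mpr (sub_nonneg.mpr hst)]
  have htle1 : Real.sinh t / Real.cosh t ≤ 1 := by
    rw [div_le_one hct]
    nlinarith [Real.cosh_sub_sinh t, Real.exp_pos (-t)]
  have hspos : 0 < Real.sinh s / Real.cosh s := div_pos hbs hcs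
  have htpos : 0 < Real.sinh t / Real.cosh t := div_pos hbt hct
  have f2 : (Real.sinh t / Real.cosh t) ^ α ≤ max 1 ((Real.sinh s / Real.cosh s) ^ α) := by
    rcases le_or_gt 0 α with hα | hα
    · exact le_max_of_le_left (Real.rpow_le_one htpos.le htle1 hα)
    · exact le_max_of_le_right (Real.rpow_le_rpow_of_nonpos hspos ftanh hα.le)
  exact mul_le_mul
    (mul_le_mul f1 f2 (Real.rpow_pos_of_pos htpos α).le (Real.rpow_pos_of_pos hbs _).le)
    le_rfl (by positivity) (by positivity)

lemma sinh_le_eight_mul (s : ℝ) (hs : 0 < s) (hs1 : s ≤ 1) : Real.sinh s ≤ 8 * s := by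
  have h1 : Real.exp (2 * s) ≤ 8 := by
    have h2 : Real.exp (2 * s) ≤ Real.exp 2 := Real.exp_le_exp.mpr (by linarith)
    have h3 : Real.exp 2 = Real.exp 1 * Real.exp 1 := by
      rw [← Real.exp_add]; norm_num
    nlinarith [Real.exp_one_lt_d9, Real.exp_pos 1]
  have h4 : (1 - 2 * s) * Real.exp (2 * s) ≤ 1 := by
    have := mul_le_mul_of_nonneg_right (Real.add_one_le_exp (-(2 * s))) (Real.exp_pos (2 * s)).le
    rwa [← Real.exp_add, neg_add_cancel, Real.exp_zero, show -(2*s) + 1 = 1 - 2*s by ring] at this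
  have h5 : Real.exp s - Real.exp (-s) = Real.exp (-s) * (Real.exp (2 * s) - 1) := by
    rw [mul_sub, ← Real.exp_add, mul_one, show -s + 2*s = s by ring]
  have h6 : Real.exp (-s) ≤ 1 := Real.exp_le_one_iff.mpr (by linarith)
  have h7 : (1:ℝ) ≤ Real.exp (2 * s) := Real.one_le_exp (by linarith)
  rw [Real.sinh_eq]
  nlinarith [Real.exp_pos (-s), Real.exp_pos (2 * s)]

lemma cosh_le_two (s : ℝ) (hs0 : 0 ≤ s) (hs1 : s ≤ 1) : Real.cosh s ≤ 2 := by
  have h2 : Real.cosh s ≤ Real.cosh 1 := by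
    rw [Real.cosh_le_cosh]
    rw [abs_of_nonneg hs0, abs_one]; exact hs1
  have h3 : Real.cosh 1 ≤ 2 := by
    rw [Real.cosh_eq]
    nlinarith [Real.exp_one_lt_d9, Real.exp_le_one_iff.mpr (by norm_num : (-1:ℝ) ≤ 0)]
  linarith

lemma exp_le_three_sinh (s : ℝ) (h1 : 1 ≤ Real.sinh s) : Real.exp s ≤ 3 * Real.sinh s := by
  have h2 : Real.cosh s ≤ 2 * Real.sinh s := by
    nlinarith [Real.cosh_sq s, Real.cosh_pos s]
  have := Real.sinh_add_cosh s
  linarith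

lemma tanh_le_one' (s : ℝ) : Real.sinh s / Real.cosh s ≤ 1 := by
  rw [div_le_one (Real.cosh_pos s)]
  nlinarith [Real.cosh_sub_sinh s, Real.exp_pos (-s)]

lemma lint_small (γ s : ℝ) (hγ : 0 < γ) (hs : 0 < s) :
    (∫⁻ t in Ioc (0:ℝ) s, ENNReal.ofReal (Real.sinh t ^ γ)) ≤
      ENNReal.ofReal (s * Real.sinh s ^ γ) := by
  calc (∫⁻ t in Ioc (0:ℝ) s, ENNReal.ofReal (Real.sinh t ^ γ))
      ≤ ∫⁻ _ in Ioc (0:ℝ) s, ENNReal.ofReal (Real.sinh s ^ γ) := by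
        refine setLIntegral_mono measurable_const fun t ht => ?_
        exact ENNReal.ofReal_le_ofReal (Real.rpow_le_rpow
          (Real.sinh_nonneg_iff.mpr ht.1.le) (Real.sinh_le_sinh.mpr ht.2) hγ.le)
    _ = ENNReal.ofReal (Real.sinh s ^ γ) * volume (Ioc (0:ℝ) s) := setLIntegral_const _ _
    _ = ENNReal.ofReal (s * Real.sinh s ^ γ) := by
        rw [Real.volume_Ioc, sub_zero, ← ENNReal.ofReal_mul (by positivity), mul_comm]

lemma lint_exp (γ s : ℝ) (hγ : 0 < γ) (hs : 0 < s) :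
    (∫⁻ t in Ioc (0:ℝ) s, ENNReal.ofReal (Real.sinh t ^ γ)) ≤
      ENNReal.ofReal ((2:ℝ) ^ (-γ) * (Real.exp (γ * s) / γ)) := by
  have hcont : Continuous fun t : ℝ => Real.exp (γ * t) :=
    Real.continuous_exp.comp (continuous_const.mul continuous_id)
  have step1 : (∫⁻ t in Ioc (0:ℝ) s, ENNReal.ofReal (Real.sinh t ^ γ)) ≤
      ∫⁻ t in Ioc (0:ℝ) s, ENNReal.ofReal ((2:ℝ) ^ (-γ) * Real.exp (γ * t)) := by
    refine setLIntegral_mono (by fun_prop) fun t ht => ?_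
    refine ENNReal.ofReal_le_ofReal ?_
    have h1 : Real.sinh t ≤ Real.exp t / 2 := by
      rw [Real.sinh_eq]; nlinarith [Real.exp_pos (-t)]
    calc Real.sinh t ^ γ ≤ (Real.exp t / 2) ^ γ :=
          Real.rpow_le_rpow (Real.sinh_nonneg_iff.mpr ht.1.le) h1 hγ.le
      _ = (2:ℝ) ^ (-γ) * Real.exp (γ * t) := by
          rw [Real.div_rpow (Real.exp_pos t).le (by norm_num), Real.rpow_neg (by norm_num),
            ← Real.exp_mul, mul_comm t γ]
          ring
  have hnn : (0:ℝ) ≤ (2:ℝ) ^ (-γ) := by positivity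
  have step2 : (∫⁻ t in Ioc (0:ℝ) s, ENNReal.ofReal ((2:ℝ) ^ (-γ) * Real.exp (γ * t)))
      = ENNReal.ofReal ((2:ℝ) ^ (-γ)) * ENNReal.ofReal (∫ t in Ioc (0:ℝ) s, Real.exp (γ * t)) := by
    have hint : IntegrableOn (fun t => Real.exp (γ * t)) (Ioc (0:ℝ) s) := hcont.integrableOn_Ioc
    simp_rw [ENNReal.ofReal_mul hnn]
    rw [lintegral_const_mul' _ _ ENNReal.ofReal_ne_top,
      ← ofReal_integral_eq_lintegral_ofReal hint
        (Filter.Eventually.of_forall fun t => (Real.exp_pos _).le)]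
  have step3 : (∫ t in Ioc (0:ℝ) s, Real.exp (γ * t)) ≤ Real.exp (γ * s) / γ := by
    rw [← intervalIntegral.integral_of_le hs.le,
      intervalIntegral.integral_comp_mul_left Real.exp hγ.ne', integral_exp, smul_eq_mul,
      mul_zero, Real.exp_zero, div_eq_inv_mul]
    have : (0:ℝ) < γ⁻¹ := by positivity
    nlinarith [Real.exp_pos (γ * s)]
  calc (∫⁻ t in Ioc (0:ℝ) s, ENNReal.ofReal (Real.sinh t ^ γ))
      ≤ ENNReal.ofReal ((2:ℝ) ^ (-γ)) * ENNReal.ofReal (∫ t in Ioc (0:ℝ) s, Real.exp (γ * t)) := by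
        rw [← step2]; exact step1
    _ ≤ ENNReal.ofReal ((2:ℝ) ^ (-γ)) * ENNReal.ofReal (Real.exp (γ * s) / γ) :=
        mul_le_mul_right (ENNReal.ofReal_le_ofReal step3) _
    _ = ENNReal.ofReal ((2:ℝ) ^ (-γ) * (Real.exp (γ * s) / γ)) := by
        rw [← ENNReal.ofReal_mul hnn]

lemma master_split (γ α p : ℝ) (hγ : 0 < γ) (hp1 : 1 ≤ p) (E : Set ℝ)
    (hE' : E ⊆ Ioi 0) {s : ℝ} (hs : 0 < s) :
    (∫⁻ t in E, ENNReal.ofReal (Real.sinh t ^ γ)) ≤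
      (∫⁻ t in Ioc (0:ℝ) s, ENNReal.ofReal (Real.sinh t ^ γ)) +
        ENNReal.ofReal (Real.sinh s ^ ((1 - p) * γ) * max 1 ((Real.sinh s / Real.cosh s) ^ α)) *
          ∫⁻ t in E, ENNReal.ofReal (Real.cosh t ^ α * Real.sinh t ^ (p * γ - α)) := by
  set M : ℝ := Real.sinh s ^ ((1 - p) * γ) * max 1 ((Real.sinh s / Real.cosh s) ^ α) with hM
  have hM0 : 0 ≤ M := by
    apply mul_nonneg (Real.rpow_nonneg (Real.sinh_nonneg_iff.mpr hs.le) _)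
    exact le_trans zero_le_one (le_max_left _ _)
  have hEsub : E ⊆ Ioc 0 s ∪ Ioi s := by
    intro t ht; rw [Ioc_union_Ioi_eq_Ioi hs.le]; exact hE' ht
  have hmg : Measurable fun t : ℝ => ENNReal.ofReal (Real.cosh t ^ α * Real.sinh t ^ (p*γ-α)) :=
    ((Real.measurable_cosh.pow_const α).mul (Real.measurable_sinh.pow_const _)).ennreal_ofReal
  calc (∫⁻ t in E, ENNReal.ofReal (Real.sinh t ^ γ))
      ≤ ∫⁻ t in (E ∩ Ioc 0 s) ∪ (E ∩ Ioi s), ENNReal.ofReal (Real.sinh t ^ γ) := by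
        apply lintegral_mono_set
        rw [← inter_union_distrib_left]
        exact fun t ht => ⟨ht, hEsub ht⟩
    _ ≤ (∫⁻ t in E ∩ Ioc 0 s, ENNReal.ofReal (Real.sinh t ^ γ)) +
          ∫⁻ t in E ∩ Ioi s, ENNReal.ofReal (Real.sinh t ^ γ) := lintegral_union_le _ _ _
    _ ≤ (∫⁻ t in Ioc (0:ℝ) s, ENNReal.ofReal (Real.sinh t ^ γ)) +
          ENNReal.ofReal M * ∫⁻ t in E, ENNReal.ofReal (Real.cosh t ^ α * Real.sinh t ^ (p*γ-α)) := by
        apply add_le_add (lintegral_mono_set inter_subset_right)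
        calc (∫⁻ t in E ∩ Ioi s, ENNReal.ofReal (Real.sinh t ^ γ))
            ≤ ∫⁻ t in E ∩ Ioi s,
                ENNReal.ofReal M * ENNReal.ofReal (Real.cosh t ^ α * Real.sinh t ^ (p*γ-α)) := by
              refine setLIntegral_mono (measurable_const.mul hmg) fun t ht => ?_
              rw [← ENNReal.ofReal_mul hM0]
              exact ENNReal.ofReal_le_ofReal (sinh_rpow_le_aux γ α p hγ hp1 hs ht.2.le)
          _ = ENNReal.ofReal M *
                ∫⁻ t in E ∩ Ioi s, ENNReal.ofReal (Real.cosh t ^ α * Real.sinh t ^ (p*γ-α)) :=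
              lintegral_const_mul _ hmg
          _ ≤ ENNReal.ofReal M *
                ∫⁻ t in E, ENNReal.ofReal (Real.cosh t ^ α * Real.sinh t ^ (p*γ-α)) :=
              mul_le_mul_right (lintegral_mono_set inter_subset_left) _

set_option maxHeartbeats 1000000 in
/-- For `γ > 0`, `α ∈ ℝ` and `p ≥ max {1, 1 - α}`, there is a constant `C > 0`
(depending only on `p, γ, α`) such that for every measurable set `E ⊆ (0, ∞)` of finite
measure, `∫₀^∞ χ_E(t) (sinh t)^γ dt ≤ C (∫₀^∞ χ_E(t) (cosh t)^α (sinh t)^{pγ-α} dt)^{1/p}`. -/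
theorem indicator_sinh_lintegral_le_rpow (γ α p : ℝ) (hγ : 0 < γ)
    (hp : max 1 (1 - α) ≤ p) :
    ∃ C : ℝ, 0 < C ∧ ∀ E : Set ℝ, MeasurableSet E → E ⊆ Ioi 0 → volume E < ⊤ →
      (∫⁻ t in Ioi (0 : ℝ),
          E.indicator (fun _ => (1 : ℝ≥0∞)) t * ENNReal.ofReal (Real.sinh t ^ γ)) ≤
        ENNReal.ofReal C *
          (∫⁻ t in Ioi (0 : ℝ),
              E.indicator (fun _ => (1 : ℝ≥0∞)) t *
                ENNReal.ofReal (Real.cosh t ^ α * Real.sinh t ^ (p * γ - α))) ^ (1 / p) := by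
  have hp1 : 1 ≤ p := le_trans (le_max_left _ _) hp
  have hpα : 1 - α ≤ p := le_trans (le_max_right _ _) hp
  have hp0 : 0 < p := lt_of_lt_of_le one_pos hp1
  set Ca : ℝ := (2:ℝ) ^ (-γ) * 3 ^ γ / γ with hCa
  set Cb : ℝ := (8:ℝ) ^ γ with hCb
  set Cc : ℝ := (2:ℝ) ^ |α| with hCc
  have hCa0 : 0 < Ca := by rw [hCa]; positivity
  have hCb0 : 0 < Cb := by rw [hCb]; positivity
  have hCc0 : 0 < Cc := by rw [hCc]; positivity
  have hCc1 : (1:ℝ) ≤ Cc := Real.one_le_rpow one_le_two (abs_nonneg α)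
  refine ⟨Ca + Cb + Cc, by positivity, ?_⟩
  intro E hE hE' hEvol
  set C : ℝ := Ca + Cb + Cc with hCdef
  have hC : 0 < C := by positivity
  -- reduce the indicator integrals to integrals over E
  have hred : ∀ f : ℝ → ℝ,
      (∫⁻ t in Ioi (0:ℝ), E.indicator (fun _ => (1:ℝ≥0∞)) t * ENNReal.ofReal (f t)) =
        ∫⁻ t in E, ENNReal.ofReal (f t) := by
    intro f
    have h1 : ∀ t, E.indicator (fun _ => (1:ℝ≥0∞)) t * ENNReal.ofReal (f t)
        = E.indicator (fun u => ENNReal.ofReal (f u)) t := fun t => by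
      by_cases ht : t ∈ E <;> simp [ht]
    simp_rw [h1]
    rw [lintegral_indicator hE, Measure.restrict_restrict hE, inter_eq_self_of_subset_left hE']
  have hL := hred (fun t => Real.sinh t ^ γ)
  have hR := hred (fun t => Real.cosh t ^ α * Real.sinh t ^ (p * γ - α))
  rw [hL, hR]
  set J := ∫⁻ t in E, ENNReal.ofReal (Real.cosh t ^ α * Real.sinh t ^ (p * γ - α)) with hJdef
  have hmg : Measurable fun t : ℝ => ENNReal.ofReal (Real.cosh t ^ α * Real.sinh t ^ (p*γ-α)) :=
    ((Real.measurable_cosh.pow_const α).mul (Real.measurable_sinh.pow_const _)).ennreal_ofReal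
  by_cases hJtop : J = ⊤
  · rw [hJtop, ENNReal.top_rpow_of_pos (by positivity), ENNReal.mul_top
      (by simp [ENNReal.ofReal_eq_zero]; linarith)]
    exact le_top
  by_cases hJ0 : J = 0
  · have hE0 : volume E = 0 := by
      have h1 := (lintegral_eq_zero_iff hmg).mp hJ0
      rw [Filter.EventuallyEq, ae_restrict_iff' hE] at h1
      have h2 : ∀ᵐ t ∂(volume : Measure ℝ), t ∉ E := by
        refine h1.mono fun t h ht => ?_
        have h3 : 0 < Real.sinh t := Real.sinh_pos_iff.mpr (hE' ht)
        have hgt : 0 < Real.cosh t ^ α * Real.sinh t ^ (p*γ-α) := by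
          have := Real.cosh_pos t
          positivity
        have h4 := h ht
        simp only [Pi.zero_apply, ENNReal.ofReal_eq_zero] at h4
        linarith
      have := ae_iff.mp h2
      simpa using this
    have hI0 : (∫⁻ t in E, ENNReal.ofReal (Real.sinh t ^ γ)) = 0 := by
      rw [Measure.restrict_eq_zero.mpr hE0]; simp
    rw [hI0]
    exact zero_le
  -- main case : 0 < J < ∞
  have hj : 0 < J.toReal := ENNReal.toReal_pos hJ0 hJtop
  set j := J.toReal with hjdef
  have hJ : J = ENNReal.ofReal j := (ENNReal.ofReal_toReal hJtop).symm
  suffices h : (∫⁻ t in E, ENNReal.ofReal (Real.sinh t ^ γ)) ≤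
      ENNReal.ofReal (C * j ^ (1/p)) by
    calc (∫⁻ t in E, ENNReal.ofReal (Real.sinh t ^ γ))
        ≤ ENNReal.ofReal (C * j ^ (1/p)) := h
      _ = ENNReal.ofReal C * ENNReal.ofReal (j ^ (1/p)) := ENNReal.ofReal_mul hC.le
      _ = ENNReal.ofReal C * J ^ (1/p) := by
          rw [hJ, ENNReal.ofReal_rpow_of_pos hj]
  rcases le_or_gt 1 j with hj1 | hj1
  · -- large case
    set s : ℝ := Real.arsinh (j ^ (1/(p*γ))) with hsdef
    have hjrp : (1:ℝ) ≤ j ^ (1/(p*γ)) := Real.one_le_rpow hj1 (by positivity)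
    have hsinh : Real.sinh s = j ^ (1/(p*γ)) := Real.sinh_arsinh _
    have hs : 0 < s := by
      rw [hsdef, Real.arsinh_pos_iff]; linarith
    have hsinh1 : 1 ≤ Real.sinh s := by rw [hsinh]; exact hjrp
    have hsg : Real.sinh s ^ γ = j ^ (1/p) := by
      rw [hsinh, ← Real.rpow_mul hj.le]
      congr 1
      field_simp
    have hT1 : (2:ℝ) ^ (-γ) * (Real.exp (γ * s) / γ) ≤ Ca * j ^ (1/p) := by
      have hexp : Real.exp s ≤ 3 * Real.sinh s := exp_le_three_sinh s hsinh1
      have h1 : Real.exp (γ * s) ≤ 3 ^ γ * j ^ (1/p) := by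
        rw [mul_comm γ s, Real.exp_mul]
        calc Real.exp s ^ γ ≤ (3 * Real.sinh s) ^ γ :=
              Real.rpow_le_rpow (Real.exp_pos s).le hexp hγ.le
          _ = 3 ^ γ * Real.sinh s ^ γ :=
              Real.mul_rpow (by norm_num) (by linarith)
          _ = 3 ^ γ * j ^ (1/p) := by rw [hsg]
      rw [hCa]
      calc (2:ℝ) ^ (-γ) * (Real.exp (γ * s) / γ) ≤ (2:ℝ) ^ (-γ) * ((3 ^ γ * j ^ (1/p)) / γ) := by
            gcongr
        _ = (2:ℝ) ^ (-γ) * 3 ^ γ / γ * j ^ (1/p) := by ring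
    have hMb : (Real.sinh s ^ ((1 - p) * γ) * max 1 ((Real.sinh s / Real.cosh s) ^ α)) * j
        ≤ Cc * j ^ (1/p) := by
      have h2 : Real.sinh s ^ ((1-p)*γ) = j ^ ((1-p)/p) := by
        rw [hsinh, ← Real.rpow_mul hj.le]
        congr 1
        field_simp
      have hcosh2 : Real.cosh s ≤ 2 * Real.sinh s := by
        nlinarith [Real.cosh_sq s, Real.cosh_pos s, hsinh1]
      have htanh : (1:ℝ)/2 ≤ Real.sinh s / Real.cosh s := by
        rw [div_le_div_iff₀ (by norm_num) (Real.cosh_pos s)]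
        linarith
      have hmax : max 1 ((Real.sinh s / Real.cosh s) ^ α) ≤ Cc := by
        rcases le_or_gt 0 α with hα | hα
        · refine max_le hCc1 (le_trans ?_ hCc1)
          exact Real.rpow_le_one (by positivity) (tanh_le_one' s) hα
        · refine max_le hCc1 ?_
          calc (Real.sinh s / Real.cosh s) ^ α ≤ ((1:ℝ)/2) ^ α :=
                Real.rpow_le_rpow_of_nonpos (by norm_num) htanh hα.le
            _ = 2 ^ (-α) := by
                rw [one_div, Real.inv_rpow (by norm_num), ← Real.rpow_neg (by norm_num)]
            _ = Cc := by rw [hCc, abs_of_neg hα]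
      calc (Real.sinh s ^ ((1 - p) * γ) * max 1 ((Real.sinh s / Real.cosh s) ^ α)) * j
          ≤ (j ^ ((1-p)/p) * Cc) * j := by
            rw [h2]
            exact mul_le_mul_of_nonneg_right
              (mul_le_mul_of_nonneg_left hmax (Real.rpow_nonneg hj.le _)) hj.le
        _ = Cc * (j ^ ((1-p)/p) * j ^ (1:ℝ)) := by rw [Real.rpow_one]; ring
        _ = Cc * j ^ (1/p) := by
            rw [← Real.rpow_add hj]
            congr 1
            field_simp
            ring_nf
    calc (∫⁻ t in E, ENNReal.ofReal (Real.sinh t ^ γ))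
        ≤ (∫⁻ t in Ioc (0:ℝ) s, ENNReal.ofReal (Real.sinh t ^ γ)) +
            ENNReal.ofReal (Real.sinh s ^ ((1 - p) * γ) *
              max 1 ((Real.sinh s / Real.cosh s) ^ α)) * J :=
          master_split γ α p hγ hp1 E hE' hs
      _ ≤ ENNReal.ofReal (Ca * j ^ (1/p)) + ENNReal.ofReal (Cc * j ^ (1/p)) := by
          refine add_le_add (le_trans (lint_exp γ s hγ hs) (ENNReal.ofReal_le_ofReal hT1)) ?_
          rw [hJ, ← ENNReal.ofReal_mul (by positivity)]
          exact ENNReal.ofReal_le_ofReal hMb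
      _ ≤ ENNReal.ofReal (C * j ^ (1/p)) := by
          rw [← ENNReal.ofReal_add (by positivity) (by positivity)]
          apply ENNReal.ofReal_le_ofReal
          have h9 : (0:ℝ) ≤ j ^ (1/p) := Real.rpow_nonneg hj.le _
          rw [hCdef]
          nlinarith
  · -- small case
    set θ : ℝ := 1/(p*(γ+1)) with hθdef
    have hθ : 0 < θ := by rw [hθdef]; positivity
    set s : ℝ := j ^ θ with hsdef
    have hs : 0 < s := Real.rpow_pos_of_pos hj _
    have hs1 : s ≤ 1 := Real.rpow_le_one hj.le hj1.le hθ.le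
    have hsinh8 : Real.sinh s ≤ 8 * s := sinh_le_eight_mul s hs hs1
    have hsinhge : s ≤ Real.sinh s := Real.self_le_sinh_iff.mpr hs.le
    have hsinh0 : 0 < Real.sinh s := lt_of_lt_of_le hs hsinhge
    have hT1 : s * Real.sinh s ^ γ ≤ Cb * j ^ (1/p) := by
      calc s * Real.sinh s ^ γ ≤ s * (8*s) ^ γ := by
            have := Real.rpow_le_rpow hsinh0.le hsinh8 hγ.le
            nlinarith
        _ = Cb * (s * s ^ γ) := by
            rw [hCb, Real.mul_rpow (by norm_num) hs.le]; ring
        _ = Cb * s ^ (1+γ) := by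
            rw [Real.rpow_add hs, Real.rpow_one]
        _ = Cb * j ^ (1/p) := by
            congr 1
            rw [hsdef, ← Real.rpow_mul hj.le]
            congr 1
            rw [hθdef, div_mul_eq_mul_div, one_mul,
              div_eq_div_iff (by positivity) hp0.ne']
            ring
    have hMb : (Real.sinh s ^ ((1 - p) * γ) * max 1 ((Real.sinh s / Real.cosh s) ^ α)) * j
        ≤ Cc * j ^ (1/p) := by
      have hsα : Real.sinh s ^ ((1-p)*γ) ≤ s ^ ((1-p)*γ) :=
        Real.rpow_le_rpow_of_nonpos hs hsinhge
          (mul_nonpos_iff.mpr (Or.inr ⟨by linarith, hγ.le⟩))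
      have hcosh2 : Real.cosh s ≤ 2 := cosh_le_two s hs.le hs1
      have htanh : s/2 ≤ Real.sinh s / Real.cosh s := by
        rw [div_le_div_iff₀ (by norm_num) (Real.cosh_pos s)]
        nlinarith [Real.cosh_pos s]
      have hmax : max 1 ((Real.sinh s / Real.cosh s) ^ α) ≤ Cc * s ^ (min α 0) := by
        have hsmin1 : (1:ℝ) ≤ s ^ (min α 0) :=
          Real.one_le_rpow_of_pos_of_le_one_of_nonpos hs hs1 (min_le_right α 0)
        rcases le_or_gt 0 α with hα | hα
        · rw [min_eq_right hα, Real.rpow_zero, mul_one]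
          refine max_le hCc1 (le_trans ?_ hCc1)
          exact Real.rpow_le_one (by positivity) (tanh_le_one' s) hα
        · rw [min_eq_left hα.le]
          have hsα1 : (1:ℝ) ≤ s ^ α := by
            have := min_eq_left hα.le
            rw [← this]; exact hsmin1
          refine max_le (by nlinarith) ?_
          calc (Real.sinh s / Real.cosh s) ^ α ≤ (s/2) ^ α :=
                Real.rpow_le_rpow_of_nonpos (by positivity) htanh hα.le
            _ = 2 ^ (-α) * s ^ α := by
                rw [Real.div_rpow hs.le (by norm_num), Real.rpow_neg (by norm_num)]
                ring
            _ = Cc * s ^ α := by rw [hCc, abs_of_neg hα]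
      have hkey : 1/p ≤ θ * ((1-p)*γ + min α 0) + 1 := by
        have h1 : 1 - p ≤ min α 0 := le_min (by linarith) (by linarith)
        have h2 : θ * ((1-p)*(γ+1)) = (1-p)/p := by
          rw [hθdef]; field_simp
        have h3 : θ * ((1-p)*γ + (1-p)) ≤ θ * ((1-p)*γ + min α 0) := by
          apply mul_le_mul_of_nonneg_left _ hθ.le
          linarith
        have h4 : (1:ℝ)/p = (1-p)/p + 1 := by field_simp; ring
        calc (1:ℝ)/p = θ * ((1-p)*γ + (1-p)) + 1 := by
              rw [h4, ← h2]; ring_nf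
          _ ≤ θ * ((1-p)*γ + min α 0) + 1 := by linarith
      have hmax0 : (0:ℝ) ≤ max 1 ((Real.sinh s / Real.cosh s) ^ α) :=
        le_trans zero_le_one (le_max_left _ _)
      calc (Real.sinh s ^ ((1 - p) * γ) * max 1 ((Real.sinh s / Real.cosh s) ^ α)) * j
          ≤ (s ^ ((1-p)*γ) * (Cc * s ^ (min α 0))) * j := by
            have h5 : (0:ℝ) ≤ s ^ ((1-p)*γ) := Real.rpow_nonneg hs.le _
            exact mul_le_mul_of_nonneg_right (mul_le_mul hsα hmax hmax0 h5) hj.le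
        _ = Cc * ((s ^ ((1-p)*γ) * s ^ (min α 0)) * j ^ (1:ℝ)) := by
            rw [Real.rpow_one]; ring
        _ = Cc * j ^ (θ * ((1-p)*γ + min α 0) + 1) := by
            congr 1
            rw [← Real.rpow_add hs, hsdef, ← Real.rpow_mul hj.le, ← Real.rpow_add hj]
        _ ≤ Cc * j ^ (1/p) := by
            apply mul_le_mul_of_nonneg_left _ hCc0.le
            exact Real.rpow_le_rpow_of_exponent_ge hj hj1.le hkey
    calc (∫⁻ t in E, ENNReal.ofReal (Real.sinh t ^ γ))
        ≤ (∫⁻ t in Ioc (0:ℝ) s, ENNReal.ofReal (Real.sinh t ^ γ)) +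
            ENNReal.ofReal (Real.sinh s ^ ((1 - p) * γ) *
              max 1 ((Real.sinh s / Real.cosh s) ^ α)) * J :=
          master_split γ α p hγ hp1 E hE' hs
      _ ≤ ENNReal.ofReal (Cb * j ^ (1/p)) + ENNReal.ofReal (Cc * j ^ (1/p)) := by
          refine add_le_add (le_trans (lint_small γ s hγ hs) (ENNReal.ofReal_le_ofReal hT1)) ?_
          rw [hJ, ← ENNReal.ofReal_mul (by positivity)]
          exact ENNReal.ofReal_le_ofReal hMb
      _ ≤ ENNReal.ofReal (C * j ^ (1/p)) := by
          rw [← ENNReal.ofReal_add (by positivity) (by positivity)]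
          apply ENNReal.ofReal_le_ofReal
          have h9 : (0:ℝ) ≤ j ^ (1/p) := Real.rpow_nonneg hj.le _
          rw [hCdef]
          nlinarith
end

section
/- Let η₁, η₂ > 0 and p ≥ 1. There exists a constant C > 0, depending only on p, η₁, η₂, such that for every measurable set E ⊆ (0, π/2), ∫₀^{π/2} χ_E(t) (sin t)^{η₁ - 1} (cos t)^{η₂ - 1} dt ≤ C (∫₀^{π/2} χ_E(t) (sin t)^{p η₁ - 1} (cos t)^{p η₂ - 1} dt)^{1/p}. -/
open MeasureTheory Set ENNReal Real

lemma lintegral_Ioo_rpow (b r : ℝ) (hb : 0 < b) (hr : -1 < r) :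
    ∫⁻ t in Ioo (0:ℝ) b, ENNReal.ofReal (t ^ r) = ENNReal.ofReal (b ^ (r+1) / (r+1)) := by
  have hii : IntervalIntegrable (fun t : ℝ => t ^ r) volume 0 b :=
    intervalIntegral.intervalIntegrable_rpow' hr
  have hio : IntegrableOn (fun t : ℝ => t ^ r) (Ioo 0 b) volume := by
    rw [intervalIntegrable_iff_integrableOn_Ioo_of_le hb.le] at hii
    exact hii
  have hnn : 0 ≤ᵐ[volume.restrict (Ioo (0:ℝ) b)] fun t : ℝ => t ^ r := by
    filter_upwards [ae_restrict_mem measurableSet_Ioo] with t ht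
    exact Real.rpow_nonneg ht.1.le r
  rw [← ofReal_integral_eq_lintegral_ofReal hio hnn]
  congr 1
  rw [← MeasureTheory.integral_Ioc_eq_integral_Ioo, ← intervalIntegral.integral_of_le hb.le,
    integral_rpow (Or.inl hr)]
  rw [Real.zero_rpow (by linarith : r + 1 ≠ 0)]
  ring

lemma powerLemma (η p : ℝ) (hη : 0 < η) (hp : 1 ≤ p) :
    ∃ C : ℝ, 0 < C ∧ ∀ E : Set ℝ, MeasurableSet E → E ⊆ Ioi 0 →
      ∫⁻ t in E, ENNReal.ofReal (t ^ (η - 1)) ≤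
        ENNReal.ofReal C * (∫⁻ t in E, ENNReal.ofReal (t ^ (p * η - 1))) ^ (1/p) := by
  have hp0 : 0 < p := lt_of_lt_of_le one_pos hp
  have hpη : 0 < p * η := mul_pos hp0 hη
  refine ⟨(p*η)^(1/p) * (1/η + 1/(p*η)), by positivity, fun E hEm hEs => ?_⟩
  set C : ℝ := (p*η)^(1/p) * (1/η + 1/(p*η)) with hC
  have hCpos : 0 < C := by positivity
  set A : ℝ≥0∞ := ∫⁻ t in E, ENNReal.ofReal (t ^ (p * η - 1)) with hA
  have hmeas : Measurable fun t : ℝ => ENNReal.ofReal (t ^ (p * η - 1)) := by fun_prop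
  rcases eq_top_or_lt_top A with hAtop | hAlt
  · rw [hAtop, ENNReal.top_rpow_of_pos (by positivity), ENNReal.mul_top
      (by simp [ENNReal.ofReal_eq_zero]; linarith)]
    exact le_top
  rcases eq_or_lt_of_le (zero_le : 0 ≤ A) with hA0 | hApos
  · have h1 : ∀ᵐ t ∂volume.restrict E, ENNReal.ofReal (t ^ (p * η - 1)) = 0 :=
      (lintegral_eq_zero_iff hmeas).mp hA0.symm
    have h2 : ∀ᵐ t ∂volume.restrict E, t ∈ E := ae_restrict_mem hEm
    have h3 : ∀ᵐ _t ∂volume.restrict E, False := by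
      filter_upwards [h1, h2] with t h1 h2
      have ht : 0 < t := hEs h2
      rw [ENNReal.ofReal_eq_zero] at h1
      exact absurd h1 (not_le.mpr (Real.rpow_pos_of_pos ht _))
    have h4 : volume.restrict E = 0 := by
      rwa [Filter.eventually_false_iff_eq_bot, ae_eq_bot] at h3
    have h5 : (∫⁻ t in E, ENNReal.ofReal (t ^ (η - 1))) = 0 := by
      rw [h4]; simp
    rw [h5]; exact zero_le
  -- main case
  set Ar : ℝ := A.toReal with hAr
  have hArpos : 0 < Ar := ENNReal.toReal_pos hApos.ne' hAlt.ne
  have hAeq : A = ENNReal.ofReal Ar := (ENNReal.ofReal_toReal hAlt.ne).symm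
  set b : ℝ := (p * η * Ar) ^ (1/(p*η)) with hbdef
  have hb : 0 < b := Real.rpow_pos_of_pos (by positivity) _
  have hbpow : b ^ (p * η) = p * η * Ar := by
    rw [hbdef, one_div, Real.rpow_inv_rpow (by positivity) hpη.ne']
  -- split E
  have hsplit : E ⊆ Ioo 0 b ∪ (E ∩ Ici b) := by
    intro t ht
    rcases lt_or_ge t b with h | h
    · exact Or.inl ⟨hEs ht, h⟩
    · exact Or.inr ⟨ht, h⟩
  have step1 : (∫⁻ t in E, ENNReal.ofReal (t ^ (η - 1))) ≤
      (∫⁻ t in Ioo (0:ℝ) b, ENNReal.ofReal (t ^ (η - 1))) +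
      (∫⁻ t in E ∩ Ici b, ENNReal.ofReal (t ^ (η - 1))) :=
    le_trans (lintegral_mono_set hsplit) (lintegral_union_le _ _ _)
  have eq1 : (∫⁻ t in Ioo (0:ℝ) b, ENNReal.ofReal (t ^ (η - 1))) =
      ENNReal.ofReal (b ^ η / η) := by
    have := lintegral_Ioo_rpow b (η - 1) hb (by linarith)
    rwa [sub_add_cancel] at this
  have step2 : (∫⁻ t in E ∩ Ici b, ENNReal.ofReal (t ^ (η - 1))) ≤
      ENNReal.ofReal (b ^ ((1-p)*η)) * A := by
    have hptwise : ∀ t ∈ E ∩ Ici b, ENNReal.ofReal (t ^ (η - 1)) ≤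
        ENNReal.ofReal (b ^ ((1-p)*η)) * ENNReal.ofReal (t ^ (p * η - 1)) := by
      rintro t ⟨htE, htb⟩
      have ht : 0 < t := hEs htE
      rw [← ENNReal.ofReal_mul (by positivity)]
      apply ENNReal.ofReal_le_ofReal
      have h1 : t ^ (η - 1) = t ^ ((1-p)*η) * t ^ (p * η - 1) := by
        rw [← Real.rpow_add ht]; ring_nf
      rw [h1]
      apply mul_le_mul_of_nonneg_right _ (Real.rpow_nonneg ht.le _)
      exact Real.rpow_le_rpow_of_nonpos hb htb (by nlinarith)
    calc (∫⁻ t in E ∩ Ici b, ENNReal.ofReal (t ^ (η - 1)))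
        ≤ ∫⁻ t in E ∩ Ici b, ENNReal.ofReal (b ^ ((1-p)*η)) * ENNReal.ofReal (t ^ (p * η - 1)) :=
          setLIntegral_mono' (hEm.inter measurableSet_Ici) hptwise
      _ = ENNReal.ofReal (b ^ ((1-p)*η)) * ∫⁻ t in E ∩ Ici b, ENNReal.ofReal (t ^ (p * η - 1)) :=
          lintegral_const_mul' _ _ ENNReal.ofReal_ne_top
      _ ≤ ENNReal.ofReal (b ^ ((1-p)*η)) * A := by
          gcongr
          exact lintegral_mono_set inter_subset_left
  have key : (∫⁻ t in E, ENNReal.ofReal (t ^ (η - 1))) ≤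
      ENNReal.ofReal (b ^ η / η + b ^ ((1-p)*η) * Ar) := by
    calc (∫⁻ t in E, ENNReal.ofReal (t ^ (η - 1)))
        ≤ ENNReal.ofReal (b ^ η / η) + ENNReal.ofReal (b ^ ((1-p)*η)) * A := by
          rw [← eq1] at *; exact le_trans step1 (by gcongr)
      _ = ENNReal.ofReal (b ^ η / η + b ^ ((1-p)*η) * Ar) := by
          rw [hAeq, ← ENNReal.ofReal_mul (Real.rpow_nonneg hb.le _),
            ← ENNReal.ofReal_add (by positivity) (by positivity)]
  refine key.trans ?_
  -- final real computation
  have hreal : b ^ η / η + b ^ ((1-p)*η) * Ar ≤ C * Ar ^ (1/p) := by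
    have h1 : b ^ ((1-p)*η) * Ar = b ^ η / (p * η) := by
      have : b ^ ((1-p)*η) * (b ^ (p*η)) = b ^ η := by
        rw [← Real.rpow_add hb]; ring_nf
      rw [eq_div_iff hpη.ne']
      calc b ^ ((1-p)*η) * Ar * (p * η) = b ^ ((1-p)*η) * (p * η * Ar) := by ring
        _ = b ^ ((1-p)*η) * b ^ (p*η) := by rw [hbpow]
        _ = b ^ η := this
    have h2 : b ^ η = (p*η)^(1/p) * Ar ^ (1/p) := by
      rw [hbdef, ← Real.rpow_mul (by positivity)]
      have he : 1/(p*η) * η = 1/p := by field_simp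
      rw [he, Real.mul_rpow (by positivity) hArpos.le]
    rw [h1, h2, hC]
    exact le_of_eq (by ring)
  calc ENNReal.ofReal (b ^ η / η + b ^ ((1-p)*η) * Ar)
      ≤ ENNReal.ofReal (C * Ar ^ (1/p)) := ENNReal.ofReal_le_ofReal hreal
    _ = ENNReal.ofReal C * ENNReal.ofReal (Ar ^ (1/p)) :=
        ENNReal.ofReal_mul hCpos.le
    _ = ENNReal.ofReal C * A ^ (1/p) := by
        rw [hAeq, ENNReal.ofReal_rpow_of_pos hArpos]


lemma rpow_le_max' {a x b e : ℝ} (ha : 0 < a) (hax : a ≤ x) (hxb : x ≤ b) :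
    x ^ e ≤ max (a ^ e) (b ^ e) := by
  rcases le_or_gt 0 e with he | he
  · exact le_max_of_le_right (Real.rpow_le_rpow (by linarith) hxb he)
  · exact le_max_of_le_left (Real.rpow_le_rpow_of_nonpos ha hax he.le)

lemma min_le_rpow' {a x b e : ℝ} (ha : 0 < a) (hax : a ≤ x) (hxb : x ≤ b) :
    min (a ^ e) (b ^ e) ≤ x ^ e := by
  rcases le_or_gt 0 e with he | he
  · exact min_le_of_left_le (Real.rpow_le_rpow ha.le hax he)
  · exact min_le_of_right_le (Real.rpow_le_rpow_of_nonpos (lt_of_lt_of_le ha hax) hxb he.le)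

lemma halfLemma (η₁ η₂ p : ℝ) (hη₁ : 0 < η₁) (hη₂ : 0 < η₂) (hp : 1 ≤ p) :
    ∃ C : ℝ, 0 < C ∧ ∀ E : Set ℝ, MeasurableSet E → E ⊆ Ioc 0 (π/4) →
      ∫⁻ t in E, ENNReal.ofReal (Real.sin t ^ (η₁ - 1) * Real.cos t ^ (η₂ - 1)) ≤
        ENNReal.ofReal C *
          (∫⁻ t in E, ENNReal.ofReal (Real.sin t ^ (p*η₁ - 1) * Real.cos t ^ (p*η₂ - 1))) ^ (1/p) := by
  have hπ := Real.pi_pos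
  have hp0 : 0 < p := lt_of_lt_of_le one_pos hp
  obtain ⟨C₀, hC₀pos, hPL⟩ := powerLemma η₁ p hη₁ hp
  set Ks : ℝ := max ((2/π) ^ (η₁-1)) 1 with hKs
  set Kc : ℝ := max (((1:ℝ)/2) ^ (η₂-1)) (1 ^ (η₂-1)) with hKc
  set ks : ℝ := min ((2/π) ^ (p*η₁-1)) 1 with hks
  set kc : ℝ := min (((1:ℝ)/2) ^ (p*η₂-1)) (1 ^ (p*η₂-1)) with hkc
  have h2π : (0:ℝ) < 2/π := by positivity
  have hKspos : 0 < Ks := lt_max_of_lt_right one_pos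
  have hKcpos : 0 < Kc := lt_max_of_lt_left (Real.rpow_pos_of_pos one_half_pos _)
  have hkspos : 0 < ks := lt_min (Real.rpow_pos_of_pos h2π _) one_pos
  have hkcpos : 0 < kc := lt_min (Real.rpow_pos_of_pos one_half_pos _)
    (Real.rpow_pos_of_pos one_pos _)
  set K : ℝ := Ks * Kc with hK
  set k : ℝ := ks * kc with hk
  have hKpos : 0 < K := mul_pos hKspos hKcpos
  have hkpos : 0 < k := mul_pos hkspos hkcpos
  refine ⟨K * C₀ * (k ^ (1/p))⁻¹, by positivity, fun E hEm hEs => ?_⟩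
  -- pointwise facts
  have hfacts : ∀ t ∈ E, 0 < t ∧ 2/π * t ≤ Real.sin t ∧ Real.sin t ≤ t ∧
      (1:ℝ)/2 ≤ Real.cos t ∧ Real.cos t ≤ 1 := by
    intro t ht
    obtain ⟨ht0, ht4⟩ := hEs ht
    have h1 : Real.cos (π/4) ≤ Real.cos t :=
      Real.cos_le_cos_of_nonneg_of_le_pi ht0.le (by linarith) ht4
    rw [Real.cos_pi_div_four] at h1
    have h2 : (1:ℝ)/2 ≤ Real.sqrt 2 / 2 := by
      have : (1:ℝ) ≤ Real.sqrt 2 := by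
        rw [show (1:ℝ) = Real.sqrt 1 by simp]
        exact Real.sqrt_le_sqrt (by norm_num)
      linarith
    exact ⟨ht0, Real.mul_le_sin ht0.le (by linarith), (Real.sin_lt ht0).le,
      le_trans h2 h1, Real.cos_le_one t⟩
  -- upper pointwise bound
  have hup : ∀ t ∈ E, Real.sin t ^ (η₁ - 1) * Real.cos t ^ (η₂ - 1) ≤ K * t ^ (η₁ - 1) := by
    intro t ht
    obtain ⟨ht0, hs1, hs2, hc1, hc2⟩ := hfacts t ht
    have hsin : Real.sin t ^ (η₁ - 1) ≤ Ks * t ^ (η₁-1) := by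
      have := rpow_le_max' (by positivity) hs1 hs2 (e := η₁ - 1)
      calc Real.sin t ^ (η₁-1) ≤ max ((2/π*t) ^ (η₁-1)) (t ^ (η₁-1)) := this
        _ = max ((2/π) ^ (η₁-1) * t ^ (η₁-1)) (1 * t ^ (η₁-1)) := by
            rw [Real.mul_rpow h2π.le ht0.le, one_mul]
        _ = Ks * t ^ (η₁-1) := by
            rw [← max_mul_of_nonneg _ _ (Real.rpow_nonneg ht0.le _)]
    have hcos : Real.cos t ^ (η₂ - 1) ≤ Kc := rpow_le_max' one_half_pos hc1 hc2
    calc Real.sin t ^ (η₁ - 1) * Real.cos t ^ (η₂ - 1)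
        ≤ (Ks * t ^ (η₁-1)) * Kc := by
          apply mul_le_mul hsin hcos (Real.rpow_nonneg (Real.cos_nonneg_of_mem_Icc
            ⟨by linarith [(hEs ht).1.le], by linarith [(hEs ht).2]⟩) _)
            (mul_nonneg hKspos.le (Real.rpow_nonneg ht0.le _))
      _ = K * t ^ (η₁-1) := by ring
  -- lower pointwise bound
  have hdn : ∀ t ∈ E, k * t ^ (p * η₁ - 1) ≤
      Real.sin t ^ (p*η₁ - 1) * Real.cos t ^ (p*η₂ - 1) := by
    intro t ht
    obtain ⟨ht0, hs1, hs2, hc1, hc2⟩ := hfacts t ht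
    have hsin : ks * t ^ (p*η₁-1) ≤ Real.sin t ^ (p*η₁ - 1) := by
      have := min_le_rpow' (mul_pos h2π ht0) hs1 hs2 (e := p*η₁ - 1)
      calc ks * t ^ (p*η₁-1)
          = min ((2/π) ^ (p*η₁-1) * t ^ (p*η₁-1)) (1 * t ^ (p*η₁-1)) := by
            rw [← min_mul_of_nonneg _ _ (Real.rpow_nonneg ht0.le _)]
        _ = min ((2/π*t) ^ (p*η₁-1)) (t ^ (p*η₁-1)) := by
            rw [Real.mul_rpow h2π.le ht0.le, one_mul]
        _ ≤ Real.sin t ^ (p*η₁-1) := this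
    have hcos : kc ≤ Real.cos t ^ (p*η₂ - 1) := min_le_rpow' one_half_pos hc1 hc2
    calc k * t ^ (p*η₁-1) = (ks * t ^ (p*η₁-1)) * kc := by ring
      _ ≤ Real.sin t ^ (p*η₁ - 1) * Real.cos t ^ (p*η₂ - 1) := by
          apply mul_le_mul hsin hcos hkcpos.le (Real.rpow_nonneg (le_trans (mul_pos h2π ht0).le hs1) _)
  set I1 := ∫⁻ t in E, ENNReal.ofReal (t ^ (η₁-1)) with hI1
  set Ip := ∫⁻ t in E, ENNReal.ofReal (t ^ (p*η₁-1)) with hIp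
  set W := ∫⁻ t in E, ENNReal.ofReal (Real.sin t ^ (p*η₁ - 1) * Real.cos t ^ (p*η₂ - 1)) with hW
  have step_up : (∫⁻ t in E, ENNReal.ofReal (Real.sin t ^ (η₁ - 1) * Real.cos t ^ (η₂ - 1))) ≤
      ENNReal.ofReal K * I1 := by
    calc (∫⁻ t in E, ENNReal.ofReal (Real.sin t ^ (η₁ - 1) * Real.cos t ^ (η₂ - 1)))
        ≤ ∫⁻ t in E, ENNReal.ofReal K * ENNReal.ofReal (t ^ (η₁-1)) := by
          apply setLIntegral_mono' hEm
          intro t ht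
          rw [← ENNReal.ofReal_mul hKpos.le]
          exact ENNReal.ofReal_le_ofReal (hup t ht)
      _ = ENNReal.ofReal K * I1 := lintegral_const_mul' _ _ ENNReal.ofReal_ne_top
  have step_dn : ENNReal.ofReal k * Ip ≤ W := by
    calc ENNReal.ofReal k * Ip
        = ∫⁻ t in E, ENNReal.ofReal k * ENNReal.ofReal (t ^ (p*η₁-1)) :=
          (lintegral_const_mul' _ _ ENNReal.ofReal_ne_top).symm
      _ ≤ W := by
          apply setLIntegral_mono' hEm
          intro t ht
          rw [← ENNReal.ofReal_mul hkpos.le]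
          exact ENNReal.ofReal_le_ofReal (hdn t ht)
  have hIpW : Ip ≤ W / ENNReal.ofReal k := by
    rw [ENNReal.le_div_iff_mul_le (Or.inl (ENNReal.ofReal_pos.mpr hkpos).ne')
      (Or.inl ENNReal.ofReal_ne_top)]
    rwa [mul_comm]
  have hEs' : E ⊆ Ioi 0 := fun t ht => (hEs ht).1
  calc (∫⁻ t in E, ENNReal.ofReal (Real.sin t ^ (η₁ - 1) * Real.cos t ^ (η₂ - 1)))
      ≤ ENNReal.ofReal K * I1 := step_up
    _ ≤ ENNReal.ofReal K * (ENNReal.ofReal C₀ * Ip ^ (1/p)) := by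
        gcongr
        exact hPL E hEm hEs'
    _ ≤ ENNReal.ofReal K * (ENNReal.ofReal C₀ * (W / ENNReal.ofReal k) ^ (1/p)) := by
        gcongr
    _ = ENNReal.ofReal (K * C₀ * (k ^ (1/p))⁻¹) * W ^ (1/p) := by
        rw [ENNReal.div_rpow_of_nonneg _ _ (by positivity),
          ENNReal.ofReal_rpow_of_pos hkpos, div_eq_mul_inv,
          ← ENNReal.ofReal_inv_of_pos (Real.rpow_pos_of_pos hkpos _),
          ENNReal.ofReal_mul (by positivity), ENNReal.ofReal_mul (by positivity),
          ENNReal.ofReal_mul (by positivity : (0:ℝ) ≤ Ks * Kc), ENNReal.ofReal_mul hKspos.le]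
        ring


/-- For `η₁, η₂ > 0` and `p ≥ 1`, there is a constant `C > 0` (depending only on
`p, η₁, η₂`) such that for every measurable set `E ⊆ (0, π/2)`,
`∫₀^{π/2} χ_E(t) (sin t)^{η₁-1} (cos t)^{η₂-1} dt
  ≤ C (∫₀^{π/2} χ_E(t) (sin t)^{pη₁-1} (cos t)^{pη₂-1} dt)^{1/p}`. -/
theorem indicator_sin_cos_lintegral_le_rpow (η₁ η₂ p : ℝ) (hη₁ : 0 < η₁) (hη₂ : 0 < η₂)
    (hp : 1 ≤ p) :
    ∃ C : ℝ, 0 < C ∧ ∀ E : Set ℝ, MeasurableSet E → E ⊆ Ioo 0 (π / 2) →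
      (∫⁻ t in Ioo (0 : ℝ) (π / 2),
          E.indicator (fun _ => (1 : ℝ≥0∞)) t *
            ENNReal.ofReal (Real.sin t ^ (η₁ - 1) * Real.cos t ^ (η₂ - 1))) ≤
        ENNReal.ofReal C *
          (∫⁻ t in Ioo (0 : ℝ) (π / 2),
              E.indicator (fun _ => (1 : ℝ≥0∞)) t *
                ENNReal.ofReal (Real.sin t ^ (p * η₁ - 1) * Real.cos t ^ (p * η₂ - 1))) ^ (1 / p) := by
  have hπ := Real.pi_pos
  obtain ⟨C₁, hC₁, h₁⟩ := halfLemma η₁ η₂ p hη₁ hη₂ hp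
  obtain ⟨C₂, hC₂, h₂⟩ := halfLemma η₂ η₁ p hη₂ hη₁ hp
  refine ⟨C₁ + C₂, by positivity, fun E hEm hEs => ?_⟩
  have hred : ∀ f : ℝ → ℝ≥0∞,
      (∫⁻ t in Ioo (0:ℝ) (π/2), E.indicator (fun _ => (1:ℝ≥0∞)) t * f t) = ∫⁻ t in E, f t := by
    intro f
    have hptw : ∀ t, E.indicator (fun _ => (1:ℝ≥0∞)) t * f t = E.indicator f t := by
      intro t
      by_cases ht : t ∈ E <;> simp [ht]
    simp_rw [hptw]
    rw [lintegral_indicator hEm, Measure.restrict_restrict hEm,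
      inter_eq_self_of_subset_left hEs]
  rw [hred, hred]
  set E₁ : Set ℝ := E ∩ Ioc 0 (π/4) with hE₁
  set E₂ : Set ℝ := E ∩ Ioo (π/4) (π/2) with hE₂
  have hE₁m : MeasurableSet E₁ := hEm.inter measurableSet_Ioc
  have hE₂m : MeasurableSet E₂ := hEm.inter measurableSet_Ioo
  have hsplit : E ⊆ E₁ ∪ E₂ := by
    intro t ht
    obtain ⟨h0, h2⟩ := hEs ht
    rcases le_or_gt t (π/4) with h | h
    · exact Or.inl ⟨ht, h0, h⟩
    · exact Or.inr ⟨ht, h, h2⟩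
  set W := ∫⁻ t in E, ENNReal.ofReal (Real.sin t ^ (p*η₁ - 1) * Real.cos t ^ (p*η₂ - 1)) with hWdef
  -- part 1
  have part1 : (∫⁻ t in E₁, ENNReal.ofReal (Real.sin t ^ (η₁ - 1) * Real.cos t ^ (η₂ - 1))) ≤
      ENNReal.ofReal C₁ * W ^ (1/p) := by
    refine le_trans (h₁ E₁ hE₁m inter_subset_right) ?_
    gcongr
    exact lintegral_mono_set inter_subset_left
  -- part 2 : reflection
  set f : ℝ → ℝ := fun s => π/2 - s with hf
  have hmp : MeasurePreserving f volume volume := Measure.measurePreserving_sub_left volume (π/2)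
  have hemb : MeasurableEmbedding f := (Homeomorph.subLeft (π/2)).measurableEmbedding
  set E₂' : Set ℝ := f ⁻¹' E₂ with hE₂'
  have hE₂'m : MeasurableSet E₂' := hemb.measurable hE₂m
  have hE₂'s : E₂' ⊆ Ioc 0 (π/4) := by
    intro s hs
    obtain ⟨_, h1, h2⟩ := hs
    simp only [hf] at h1 h2
    constructor <;> [linarith; linarith]
  have refl1 : (∫⁻ t in E₂, ENNReal.ofReal (Real.sin t ^ (η₁ - 1) * Real.cos t ^ (η₂ - 1))) =
      ∫⁻ s in E₂', ENNReal.ofReal (Real.sin s ^ (η₂ - 1) * Real.cos s ^ (η₁ - 1)) := by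
    rw [← hmp.setLIntegral_comp_preimage_emb hemb
      (fun t => ENNReal.ofReal (Real.sin t ^ (η₁ - 1) * Real.cos t ^ (η₂ - 1))) E₂]
    apply lintegral_congr
    intro s
    simp only [hf]
    rw [Real.sin_pi_div_two_sub, Real.cos_pi_div_two_sub, mul_comm]
  have refl2 : (∫⁻ s in E₂', ENNReal.ofReal (Real.sin s ^ (p*η₂ - 1) * Real.cos s ^ (p*η₁ - 1))) =
      ∫⁻ t in E₂, ENNReal.ofReal (Real.sin t ^ (p*η₁ - 1) * Real.cos t ^ (p*η₂ - 1)) := by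
    rw [← hmp.setLIntegral_comp_preimage_emb hemb
      (fun t => ENNReal.ofReal (Real.sin t ^ (p*η₁ - 1) * Real.cos t ^ (p*η₂ - 1))) E₂]
    apply lintegral_congr
    intro s
    simp only [hf]
    rw [Real.sin_pi_div_two_sub, Real.cos_pi_div_two_sub, mul_comm]
  have part2 : (∫⁻ t in E₂, ENNReal.ofReal (Real.sin t ^ (η₁ - 1) * Real.cos t ^ (η₂ - 1))) ≤
      ENNReal.ofReal C₂ * W ^ (1/p) := by
    rw [refl1]
    refine le_trans (h₂ E₂' hE₂'m hE₂'s) ?_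
    rw [refl2]
    gcongr
    exact lintegral_mono_set inter_subset_left
  calc (∫⁻ t in E, ENNReal.ofReal (Real.sin t ^ (η₁ - 1) * Real.cos t ^ (η₂ - 1)))
      ≤ (∫⁻ t in E₁, ENNReal.ofReal (Real.sin t ^ (η₁ - 1) * Real.cos t ^ (η₂ - 1))) +
        (∫⁻ t in E₂, ENNReal.ofReal (Real.sin t ^ (η₁ - 1) * Real.cos t ^ (η₂ - 1))) :=
        le_trans (lintegral_mono_set hsplit) (lintegral_union_le _ _ _)
    _ ≤ ENNReal.ofReal C₁ * W ^ (1/p) + ENNReal.ofReal C₂ * W ^ (1/p) := add_le_add part1 part2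
    _ = ENNReal.ofReal (C₁ + C₂) * W ^ (1/p) := by
        rw [ENNReal.ofReal_add hC₁.le hC₂.le, add_mul]
end

section
/- Let 1 ≤ p < ∞, γ < 0, and let f ∈ L^p(ℝ, (1 + e^x)^γ dx) be nonnegative. Then liminf_{h → -∞} ‖f + τ_h f‖_{L^p(ℝ, (1+e^x)^γ dx)} ≥ 2^{1/p} ‖f‖_{L^p(ℝ, (1+e^x)^γ dx)}, where τ_h f(x) = f(x - h) is the translation of f by h. -/
open MeasureTheory Filter ENNReal

/-- For `1 ≤ p < ∞`, `γ < 0` and a nonnegative `f ∈ L^p(ℝ, (1+e^x)^γ dx)`,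
`liminf_{h → -∞} ‖f + τ_h f‖_{L^p((1+e^x)^γ dx)} ≥ 2^{1/p} ‖f‖_{L^p((1+e^x)^γ dx)}`,
where `τ_h f (x) = f (x - h)`. -/
theorem liminf_translate_weighted_norm (p γ : ℝ) (hp : 1 ≤ p) (hγ : γ < 0)
    (μ : Measure ℝ)
    (hμ : μ = volume.withDensity fun x => ENNReal.ofReal ((1 + Real.exp x) ^ γ))
    (f : ℝ → ℝ) (hf : MemLp f (ENNReal.ofReal p) μ) (hf0 : ∀ x, 0 ≤ f x) :
    (2 : ℝ≥0∞) ^ (1 / p) * eLpNorm f (ENNReal.ofReal p) μ ≤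
      liminf (fun h : ℝ => eLpNorm (fun x => f x + f (x - h)) (ENNReal.ofReal p) μ) atBot := by
  have hp0 : (0 : ℝ) < p := lt_of_lt_of_le one_pos hp
  set q : ℝ≥0∞ := ENNReal.ofReal p with hq
  have hq0 : q ≠ 0 := by
    simp [hq, ENNReal.ofReal_eq_zero, not_le, hp0]
  have hqt : q ≠ ⊤ := ENNReal.ofReal_ne_top
  have hqr : q.toReal = p := ENNReal.toReal_ofReal hp0.le
  set w : ℝ → ℝ≥0∞ := fun x => ENNReal.ofReal ((1 + Real.exp x) ^ γ) with hw
  have hwm : Measurable w := by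
    fun_prop
  have hwfin : ∀ᵐ x ∂(volume : Measure ℝ), w x < ⊤ := by
    filter_upwards with x; exact ENNReal.ofReal_lt_top
  set F : ℝ → ℝ≥0∞ := fun x => (‖f x‖₊ : ℝ≥0∞) ^ p with hF
  -- main step: for every `h ≤ 0`,
  -- `2^{1/p} * eLpNorm f ≤ eLpNorm (f + τ_h f)`
  have key : ∀ h : ℝ, h ≤ 0 →
      (2 : ℝ≥0∞) ^ (1 / p) * eLpNorm f q μ ≤
        eLpNorm (fun x => f x + f (x - h)) q μ := by
    intro h hh
    rw [eLpNorm_eq_lintegral_rpow_enorm_toReal hq0 hqt, eLpNorm_eq_lintegral_rpow_enorm_toReal hq0 hqt, hqr]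
    -- translated integral dominates the original one
    have step1 : ∫⁻ x, F x ∂μ ≤ ∫⁻ x, F (x - h) ∂μ := by
      rw [hμ, lintegral_withDensity_eq_lintegral_mul_non_measurable _ hwm hwfin,
        lintegral_withDensity_eq_lintegral_mul_non_measurable _ hwm hwfin]
      have := lintegral_add_right_eq_self (μ := (volume : Measure ℝ))
        (fun x => (w * fun x => F (x - h)) x) h
      rw [← this]
      refine lintegral_mono fun y => ?_
      simp only [Pi.mul_apply, add_sub_cancel_right]
      refine mul_le_mul_left ?_ _
      refine ENNReal.ofReal_le_ofReal ?_
      refine Real.rpow_le_rpow_of_nonpos (by positivity) ?_ hγ.le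
      have : Real.exp (y + h) ≤ Real.exp y := Real.exp_le_exp.2 (by linarith)
      linarith
    -- pointwise superadditivity of `t ↦ t^p`
    have step2 : ∀ x, F x + F (x - h) ≤ (‖f x + f (x - h)‖₊ : ℝ≥0∞) ^ p := by
      intro x
      have h1 : (‖f x‖₊ : ℝ≥0∞) = ENNReal.ofReal (f x) := Real.enorm_eq_ofReal (hf0 x)
      have h2 : (‖f (x - h)‖₊ : ℝ≥0∞) = ENNReal.ofReal (f (x - h)) :=
        Real.enorm_eq_ofReal (hf0 _)
      have h3 : (‖f x + f (x - h)‖₊ : ℝ≥0∞) = ENNReal.ofReal (f x) + ENNReal.ofReal (f (x - h)) := by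
        rw [← enorm_eq_nnnorm, Real.enorm_eq_ofReal (by have := hf0 x; have := hf0 (x - h); linarith),
          ENNReal.ofReal_add (hf0 x) (hf0 _)]
      rw [hF]
      simp only [h1, h2, h3]
      exact ENNReal.add_rpow_le_rpow_add _ _ hp
    have step3 : (2 : ℝ≥0∞) * ∫⁻ x, F x ∂μ ≤ ∫⁻ x, (‖f x + f (x - h)‖₊ : ℝ≥0∞) ^ p ∂μ := by
      calc (2 : ℝ≥0∞) * ∫⁻ x, F x ∂μ = (∫⁻ x, F x ∂μ) + ∫⁻ x, F x ∂μ := by ring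
        _ ≤ (∫⁻ x, F x ∂μ) + ∫⁻ x, F (x - h) ∂μ := by gcongr
        _ ≤ ∫⁻ x, (F x + F (x - h)) ∂μ := le_lintegral_add _ _
        _ ≤ _ := lintegral_mono step2
    calc (2 : ℝ≥0∞) ^ (1 / p) * (∫⁻ x, (‖f x‖₊ : ℝ≥0∞) ^ p ∂μ) ^ (1 / p)
        = ((2 : ℝ≥0∞) * ∫⁻ x, F x ∂μ) ^ (1 / p) := by
          rw [ENNReal.mul_rpow_of_nonneg _ _ (by positivity)]
      _ ≤ (∫⁻ x, (‖f x + f (x - h)‖₊ : ℝ≥0∞) ^ p ∂μ) ^ (1 / p) :=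
          ENNReal.rpow_le_rpow step3 (by positivity)
  -- conclude via the liminf
  have hev : ∀ᶠ h : ℝ in atBot,
      (2 : ℝ≥0∞) ^ (1 / p) * eLpNorm f q μ ≤
        eLpNorm (fun x => f x + f (x - h)) q μ :=
    eventually_atBot.2 ⟨0, fun h hh => key h hh⟩
  calc (2 : ℝ≥0∞) ^ (1 / p) * eLpNorm f q μ
      = liminf (fun _ : ℝ => (2 : ℝ≥0∞) ^ (1 / p) * eLpNorm f q μ) atBot :=
        (liminf_const _).symm
    _ ≤ liminf (fun h : ℝ => eLpNorm (fun x => f x + f (x - h)) q μ) atBot :=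
        liminf_le_liminf hev
end

section
/- Let 1 ≤ p < ∞ and f ∈ L^p(ℝ). Then lim_{h → ∞} ‖f + τ_h f‖_{L^p(ℝ)} = 2^{1/p} ‖f‖_{L^p(ℝ)}, where τ_h f(x) = f(x - h). -/
open MeasureTheory Filter ENNReal Set

private lemma translate_eLpNorm (q : ℝ≥0∞) (u : ℝ → ℝ)
    (hu : AEStronglyMeasurable u volume) (h : ℝ) :
    eLpNorm (fun x => u (x - h)) q volume = eLpNorm u q volume :=
  eLpNorm_comp_measurePreserving hu (measurePreserving_sub_right volume h)

private lemma key_disjoint (p : ℝ) (hp : 1 ≤ p) (g : ℝ → ℝ) (hgc : Continuous g)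
    (hgs : HasCompactSupport g) :
    ∀ᶠ h : ℝ in atTop,
      eLpNorm (fun x => g x + g (x - h)) (ENNReal.ofReal p) volume
        = (2 : ℝ≥0∞) ^ (1 / p) * eLpNorm g (ENNReal.ofReal p) volume := by
  have hp0 : 0 < p := lt_of_lt_of_le one_pos hp
  have hq0 : (ENNReal.ofReal p) ≠ 0 := by simp [ENNReal.ofReal_eq_zero, not_le, hp0]
  have hqT : (ENNReal.ofReal p) ≠ ∞ := ENNReal.ofReal_ne_top
  obtain ⟨R, hR⟩ := hgs.isBounded.subset_closedBall 0
  filter_upwards [eventually_gt_atTop (2 * R)] with h hh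
  have disj : ∀ x : ℝ, g x = 0 ∨ g (x - h) = 0 := by
    intro x
    by_contra hcon
    push_neg at hcon
    have h1 : x ∈ Metric.closedBall (0 : ℝ) R :=
      hR (subset_tsupport g (by simp [Function.mem_support, hcon.1]))
    have h2 : x - h ∈ Metric.closedBall (0 : ℝ) R :=
      hR (subset_tsupport g (by simp [Function.mem_support, hcon.2]))
    rw [Real.closedBall_eq_Icc] at h1 h2
    have : x ≤ 0 + R := h1.2
    have : 0 - R ≤ x - h := h2.1
    linarith
  have mg : Measurable (fun x : ℝ => ((‖g x‖₊ : ℝ≥0∞)) ^ p) :=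
    (hgc.measurable.nnnorm.coe_nnreal_ennreal).pow_const p
  have hI : (∫⁻ x, ((‖g x + g (x - h)‖₊ : ℝ≥0∞)) ^ p)
      = 2 * ∫⁻ x, ((‖g x‖₊ : ℝ≥0∞)) ^ p := by
    have hpt : ∀ x, ((‖g x + g (x - h)‖₊ : ℝ≥0∞)) ^ p
        = ((‖g x‖₊ : ℝ≥0∞)) ^ p + ((‖g (x - h)‖₊ : ℝ≥0∞)) ^ p := by
      intro x
      rcases disj x with h0 | h0 <;>
        simp [h0, ENNReal.zero_rpow_of_pos hp0]
    simp only [hpt]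
    rw [lintegral_add_left mg]
    have : (∫⁻ x, ((‖g (x - h)‖₊ : ℝ≥0∞)) ^ p) = ∫⁻ x, ((‖g x‖₊ : ℝ≥0∞)) ^ p :=
      (measurePreserving_sub_right volume h).lintegral_comp mg
    rw [this, two_mul]
  rw [eLpNorm_eq_lintegral_rpow_enorm_toReal hq0 hqT, eLpNorm_eq_lintegral_rpow_enorm_toReal hq0 hqT]
  simp only [enorm_eq_nnnorm]
  rw [ENNReal.toReal_ofReal hp0.le, hI,
    ENNReal.mul_rpow_of_nonneg _ _ (by positivity : (0:ℝ) ≤ 1 / p)]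

/-- For `1 ≤ p < ∞` and `f ∈ L^p(ℝ)`,
`lim_{h → ∞} ‖f + τ_h f‖_{L^p(ℝ)} = 2^{1/p} ‖f‖_{L^p(ℝ)}`, where `τ_h f (x) = f (x - h)`. -/
theorem tendsto_translate_norm (p : ℝ) (hp : 1 ≤ p) (f : ℝ → ℝ)
    (hf : MemLp f (ENNReal.ofReal p) volume) :
    Tendsto (fun h : ℝ => eLpNorm (fun x => f x + f (x - h)) (ENNReal.ofReal p) volume)
      atTop (nhds ((2 : ℝ≥0∞) ^ (1 / p) * eLpNorm f (ENNReal.ofReal p) volume)) := by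
  set q := ENNReal.ofReal p with hqdef
  have hp0 : 0 < p := lt_of_lt_of_le one_pos hp
  have hq1 : 1 ≤ q := by
    rw [hqdef]
    exact ENNReal.one_le_ofReal.2 hp
  have hqT : q ≠ ∞ := ENNReal.ofReal_ne_top
  have h2p : (2 : ℝ≥0∞) ^ (1 / p) ≤ 2 := by
    calc (2 : ℝ≥0∞) ^ (1 / p) ≤ (2 : ℝ≥0∞) ^ (1 : ℝ) :=
          ENNReal.rpow_le_rpow_of_exponent_le (by norm_num)
            (by rw [div_le_one hp0]; exact hp)
      _ = 2 := by simp
  set L := (2 : ℝ≥0∞) ^ (1 / p) * eLpNorm f q volume with hL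
  apply ENNReal.tendsto_nhds_of_Icc
  intro ε hε
  set δ := min (ε / 4) 1 with hδdef
  have hδ0 : δ ≠ 0 := by
    refine ne_of_gt (lt_min ?_ one_pos)
    exact ENNReal.div_pos hε.ne' (by norm_num)
  have hδε : 4 * δ ≤ ε := by
    calc (4 : ℝ≥0∞) * δ ≤ 4 * (ε / 4) := mul_le_mul_right (min_le_left _ _) 4
      _ = ε := ENNReal.mul_div_cancel (by norm_num) (by norm_num)
  obtain ⟨g, hgs, hfg, hgc, hgm⟩ := hf.exists_hasCompactSupport_eLpNorm_sub_le hqT hδ0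
  have hfm : AEStronglyMeasurable f volume := hf.aestronglyMeasurable
  have hgm' : AEStronglyMeasurable g volume := hgc.aestronglyMeasurable
  have hfg' : eLpNorm (fun x => f x - g x) q volume ≤ δ := hfg
  have hfgm : AEStronglyMeasurable (fun x => f x - g x) volume := hfm.sub hgm'
  filter_upwards [key_disjoint p hp g hgc hgs] with h hkey
  -- translated measurable versions
  have hτ : ∀ u : ℝ → ℝ, AEStronglyMeasurable u volume →
      AEStronglyMeasurable (fun x => u (x - h)) volume := fun u hu =>
    hu.comp_quasiMeasurePreserving (measurePreserving_sub_right volume h).quasiMeasurePreserving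
  set W := fun x : ℝ => (f x - g x) + (f (x - h) - g (x - h)) with hWdef
  have hWm : AEStronglyMeasurable W volume := hfgm.add (hτ _ hfgm)
  have hWδ : eLpNorm W q volume ≤ 2 * δ := by
    calc eLpNorm W q volume
        ≤ eLpNorm (fun x => f x - g x) q volume
          + eLpNorm (fun x => f (x - h) - g (x - h)) q volume :=
          eLpNorm_add_le hfgm (hτ _ hfgm) hq1
      _ = eLpNorm (fun x => f x - g x) q volume + eLpNorm (fun x => f x - g x) q volume :=
          by rw [translate_eLpNorm q (fun x => f x - g x) hfgm h]
      _ ≤ δ + δ := add_le_add hfg' hfg'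
      _ = 2 * δ := (two_mul δ).symm
  have hGm : AEStronglyMeasurable (fun x => g x + g (x - h)) volume := hgm'.add (hτ _ hgm')
  have hFm : AEStronglyMeasurable (fun x => f x + f (x - h)) volume := hfm.add (hτ _ hfm)
  -- comparisons between ‖f‖ and ‖g‖
  have hBA : eLpNorm g q volume ≤ eLpNorm f q volume + δ := by
    have h1 := eLpNorm_add_le hfm (hgm'.sub hfm) hq1
    rw [show f + (g - f) = g from by funext x; simp, eLpNorm_sub_comm] at h1
    exact h1.trans (add_le_add_right hfg _)
  have hAB : eLpNorm f q volume ≤ eLpNorm g q volume + δ := by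
    have h1 := eLpNorm_add_le hgm' (hfm.sub hgm') hq1
    rw [show g + (f - g) = f from by funext x; simp] at h1
    exact h1.trans (add_le_add_right hfg _)
  constructor
  · -- lower bound : L - ε ≤ N h
    rw [tsub_le_iff_right]
    calc L = (2 : ℝ≥0∞) ^ (1 / p) * eLpNorm f q volume := hL
      _ ≤ (2 : ℝ≥0∞) ^ (1 / p) * (eLpNorm g q volume + δ) := mul_le_mul_right hAB _
      _ = (2 : ℝ≥0∞) ^ (1 / p) * eLpNorm g q volume + (2 : ℝ≥0∞) ^ (1 / p) * δ := mul_add _ _ _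
      _ ≤ eLpNorm (fun x => g x + g (x - h)) q volume + 2 * δ := by
          rw [← hkey]; exact add_le_add_right (mul_le_mul_left h2p δ) _
      _ ≤ (eLpNorm (fun x => f x + f (x - h)) q volume + eLpNorm W q volume) + 2 * δ := by
          refine add_le_add_left ?_ _
          have hdecomp : (fun x => g x + g (x - h))
              = (fun x => (f x + f (x - h)) + (-(W x))) := by
            funext x; simp only [hWdef]; ring
          rw [hdecomp]
          have := eLpNorm_add_le hFm hWm.neg hq1
          refine this.trans_eq ?_
          congr 1
          exact eLpNorm_neg W q volume
      _ ≤ (eLpNorm (fun x => f x + f (x - h)) q volume + 2 * δ) + 2 * δ :=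
          add_le_add_left (add_le_add_right hWδ _) _
      _ = eLpNorm (fun x => f x + f (x - h)) q volume + 4 * δ := by ring
      _ ≤ eLpNorm (fun x => f x + f (x - h)) q volume + ε := add_le_add_right hδε _
  · -- upper bound : N h ≤ L + ε
    calc eLpNorm (fun x => f x + f (x - h)) q volume
        ≤ eLpNorm W q volume + eLpNorm (fun x => g x + g (x - h)) q volume := by
          have hdecomp : (fun x => f x + f (x - h))
              = (fun x => W x + (g x + g (x - h))) := by
            funext x; simp only [hWdef]; ring
          rw [hdecomp]
          exact eLpNorm_add_le hWm hGm hq1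
      _ ≤ 2 * δ + (2 : ℝ≥0∞) ^ (1 / p) * eLpNorm g q volume := by
          rw [hkey]; exact add_le_add_left hWδ _
      _ ≤ 2 * δ + (2 : ℝ≥0∞) ^ (1 / p) * (eLpNorm f q volume + δ) :=
          add_le_add_right (mul_le_mul_right hBA _) _
      _ = 2 * δ + ((2 : ℝ≥0∞) ^ (1 / p) * eLpNorm f q volume + (2 : ℝ≥0∞) ^ (1 / p) * δ) := by
          rw [mul_add]
      _ ≤ 2 * δ + (L + 2 * δ) := by
          rw [hL]; exact add_le_add_right (add_le_add_right (mul_le_mul_left h2p δ) _) _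
      _ = L + 4 * δ := by ring
      _ ≤ L + ε := add_le_add_right hδε _
end

section
/- Let 0 < b < 1, m > 0, α ∈ ℝ, and 0 < p < 2. Then the quotient H(a) = (∫_{a/b}^1 (1 - x²)^{-1/2} dx)^p / (∫_a^b (1 - x²)^{m/2 - 1} x^α dx) tends to +∞ as a → b⁻. -/
open MeasureTheory Set Filter

lemma sphereN_integrable {t : ℝ} (ht0 : 0 ≤ t) (ht1 : t < 1) :
    IntegrableOn (fun x : ℝ => (1 - x ^ 2) ^ (-(1 : ℝ) / 2)) (Ioo t 1) := by
  have hg : IntegrableOn (fun x : ℝ => (1 - x) ^ (-(1 : ℝ) / 2)) (Ioo t 1) := by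
    have h := (intervalIntegral.intervalIntegrable_rpow' (a := 0) (b := 1 - t)
      (r := -(1 : ℝ) / 2) (by norm_num)).comp_sub_left 1
    simp only [sub_zero, sub_sub_cancel] at h
    have := (intervalIntegrable_iff_integrableOn_Ioc_of_le ht1.le).mp h.symm
    exact this.mono_set Ioo_subset_Ioc_self
  apply Integrable.mono hg
  · apply ContinuousOn.aestronglyMeasurable ?_ measurableSet_Ioo
    apply ContinuousOn.rpow_const (by fun_prop)
    intro x hx
    left
    have : x ^ 2 < 1 := by nlinarith [hx.1, hx.2, ht0]
    intro h; rw [sub_eq_zero] at h; exact this.ne h.symm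
  · filter_upwards [ae_restrict_mem measurableSet_Ioo] with x hx
    have hx0 : 0 ≤ x := le_trans ht0 hx.1.le
    have h1 : (0:ℝ) < 1 - x := by linarith [hx.2]
    have h2 : 1 - x ≤ 1 - x ^ 2 := by nlinarith [hx.2]
    rw [Real.norm_eq_abs, Real.norm_eq_abs, abs_of_nonneg (Real.rpow_nonneg (by nlinarith) _),
      abs_of_nonneg (Real.rpow_nonneg h1.le _)]
    exact Real.rpow_le_rpow_of_nonpos h1 h2 (by norm_num)

lemma sphereN_lower {t : ℝ} (ht0 : 0 ≤ t) (ht1 : t < 1) :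
    (2 : ℝ) ^ (-(1 : ℝ) / 2) * (1 - t) ^ ((1 : ℝ) / 2) ≤
      ∫ x in Ioo t 1, (1 - x ^ 2) ^ (-(1 : ℝ) / 2) := by
  have h1t : (0:ℝ) < 1 - t := by linarith
  have hconst : ∫ x in Ioo t 1, ((2 * (1 - t)) ^ (-(1 : ℝ) / 2) : ℝ) =
      (1 - t) * (2 * (1 - t)) ^ (-(1 : ℝ) / 2) := by
    rw [setIntegral_const, Real.volume_real_Ioo_of_le (by linarith), smul_eq_mul]
  have hmono : ∫ x in Ioo t 1, ((2 * (1 - t)) ^ (-(1 : ℝ) / 2) : ℝ) ≤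
      ∫ x in Ioo t 1, (1 - x ^ 2) ^ (-(1 : ℝ) / 2) := by
    apply setIntegral_mono_on (integrableOn_const measure_Ioo_lt_top.ne)
      (sphereN_integrable ht0 ht1) measurableSet_Ioo
    intro x hx
    have hx2 : (0:ℝ) < 1 - x ^ 2 := by nlinarith [hx.1, hx.2, ht0]
    apply Real.rpow_le_rpow_of_nonpos hx2 (by nlinarith [hx.1, hx.2, ht0]) (by norm_num)
  calc (2 : ℝ) ^ (-(1 : ℝ) / 2) * (1 - t) ^ ((1 : ℝ) / 2)
      = (1 - t) * (2 * (1 - t)) ^ (-(1 : ℝ) / 2) := by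
        rw [Real.mul_rpow (by norm_num) h1t.le]
        rw [show ((1:ℝ)/2) = 1 + (-(1:ℝ)/2) by norm_num, Real.rpow_add h1t, Real.rpow_one]
        ring
    _ ≤ _ := hconst ▸ hmono

lemma sphereD_contOn {m α : ℝ} {a b : ℝ} (ha : 0 < a) (hb : b < 1) :
    ContinuousOn (fun x : ℝ => (1 - x ^ 2) ^ (m / 2 - 1) * x ^ α) (Icc a b) := by
  apply ContinuousOn.mul
  · apply ContinuousOn.rpow_const (by fun_prop)
    intro x hx
    left
    have : x ^ 2 < 1 := by nlinarith [hx.1, hx.2]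
    intro h; rw [sub_eq_zero] at h; exact this.ne h.symm
  · apply ContinuousOn.rpow_const (by fun_prop)
    intro x hx; left; exact (lt_of_lt_of_le ha hx.1).ne'

lemma sphereD_integrable {m α : ℝ} {a b : ℝ} (ha : 0 < a) (hb : b < 1) :
    IntegrableOn (fun x : ℝ => (1 - x ^ 2) ^ (m / 2 - 1) * x ^ α) (Ioo a b) :=
  ((sphereD_contOn (m := m) (α := α) ha hb).integrableOn_Icc).mono_set Ioo_subset_Icc_self

lemma sphereD_pos {m α : ℝ} {a b : ℝ} (ha : 0 < a) (hab : a < b) (hb : b < 1) :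
    0 < ∫ x in Ioo a b, (1 - x ^ 2) ^ (m / 2 - 1) * x ^ α := by
  have hpos : ∀ x ∈ Ioo a b, 0 < (1 - x ^ 2) ^ (m / 2 - 1) * x ^ α := by
    intro x hx
    have h1 : (0:ℝ) < 1 - x ^ 2 := by nlinarith [hx.1, hx.2]
    exact mul_pos (Real.rpow_pos_of_pos h1 _) (Real.rpow_pos_of_pos (lt_trans ha hx.1) _)
  rw [setIntegral_pos_iff_support_of_nonneg_ae]
  · refine lt_of_lt_of_le ?_ (measure_mono (fun x hx => ⟨(hpos x hx).ne', hx⟩))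
    simp [Real.volume_Ioo]; linarith
  · filter_upwards [ae_restrict_mem measurableSet_Ioo] with x hx using (hpos x hx).le
  · exact sphereD_integrable ha hb


/-- For `0 < b < 1`, `m > 0`, `α ∈ ℝ` and `0 < p < 2`, the quotient
`H(a) = (∫_{a/b}^1 (1-x²)^{-1/2} dx)^p / ∫_a^b (1-x²)^{m/2-1} x^α dx`
tends to `+∞` as `a → b⁻`. -/
theorem tendsto_sphere_annulus_quotient_atTop (b m α p : ℝ) (hb0 : 0 < b) (hb1 : b < 1)
    (hm : 0 < m) (hp0 : 0 < p) (hp2 : p < 2) :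
    Tendsto (fun a : ℝ =>
        (∫ x in Ioo (a / b) 1, (1 - x ^ 2) ^ (-(1 : ℝ) / 2)) ^ p /
          ∫ x in Ioo a b, (1 - x ^ 2) ^ (m / 2 - 1) * x ^ α)
      (nhdsWithin b (Set.Iio b)) atTop := by
  obtain ⟨x₀, hx₀, hMx⟩ := (isCompact_Icc (a := b / 2) (b := b)).exists_isMaxOn
    ⟨b, by constructor <;> linarith⟩ (sphereD_contOn (m := m) (α := α) (half_pos hb0) hb1)
  set M : ℝ := max ((1 - x₀ ^ 2) ^ (m / 2 - 1) * x₀ ^ α) 1 with hMdef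
  have hMpos : 0 < M := lt_of_lt_of_le one_pos (le_max_right _ _)
  set e : ℝ := p / 2 with hedef
  have he : 0 < e := by positivity
  have he1 : e < 1 := by rw [hedef]; linarith
  set K : ℝ := 2 ^ (-e) / (b ^ e * M) with hKdef
  have hK : 0 < K := by
    apply div_pos (Real.rpow_pos_of_pos two_pos _)
    exact mul_pos (Real.rpow_pos_of_pos hb0 _) hMpos
  have hbound : ∀ᶠ a in nhdsWithin b (Set.Iio b), K * (b - a) ^ (e - 1) ≤
      (∫ x in Ioo (a / b) 1, (1 - x ^ 2) ^ (-(1 : ℝ) / 2)) ^ p /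
        ∫ x in Ioo a b, (1 - x ^ 2) ^ (m / 2 - 1) * x ^ α := by
    filter_upwards [Ioo_mem_nhdsLT_of_mem (⟨by linarith, le_refl b⟩ : b ∈ Ioc (b / 2) b)]
      with a ha
    obtain ⟨ha1, ha2⟩ := ha
    have hapos : 0 < a := lt_trans (half_pos hb0) ha1
    have hba : 0 < b - a := by linarith
    have ht0 : 0 ≤ a / b := by positivity
    have ht1 : a / b < 1 := (div_lt_one hb0).2 ha2
    have h1t : 1 - a / b = (b - a) / b := by field_simp
    -- lower bound on numerator
    have hN := sphereN_lower ht0 ht1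
    have hN0 : 0 ≤ ∫ x in Ioo (a / b) 1, (1 - x ^ 2) ^ (-(1 : ℝ) / 2) :=
      le_trans (mul_nonneg (by positivity) (Real.rpow_nonneg (by rw [h1t]; positivity) _)) hN
    have hNp : 2 ^ (-e) * ((b - a) / b) ^ e ≤
        (∫ x in Ioo (a / b) 1, (1 - x ^ 2) ^ (-(1 : ℝ) / 2)) ^ p := by
      have h := Real.rpow_le_rpow (mul_nonneg (by positivity) (Real.rpow_nonneg (by rw [h1t]; positivity) _)) hN hp0.le
      calc 2 ^ (-e) * ((b - a) / b) ^ e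
          = ((2 : ℝ) ^ (-(1 : ℝ) / 2) * (1 - a / b) ^ ((1 : ℝ) / 2)) ^ p := by
            rw [Real.mul_rpow (by positivity) (Real.rpow_nonneg (by rw [h1t]; positivity) _), ← Real.rpow_mul (by norm_num),
              ← Real.rpow_mul (by rw [h1t]; positivity), h1t]
            norm_num [hedef]
            ring_nf
        _ ≤ _ := h
    -- upper bound on denominator
    have hD : (∫ x in Ioo a b, (1 - x ^ 2) ^ (m / 2 - 1) * x ^ α) ≤ M * (b - a) := by
      have : (∫ x in Ioo a b, (1 - x ^ 2) ^ (m / 2 - 1) * x ^ α) ≤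
          ∫ _ in Ioo a b, M := by
        apply setIntegral_mono_on (sphereD_integrable hapos hb1)
          (integrableOn_const measure_Ioo_lt_top.ne) measurableSet_Ioo
        intro x hx
        exact le_trans (hMx ⟨le_trans ha1.le hx.1.le, hx.2.le⟩) (le_max_left _ _)
      rwa [setIntegral_const, Real.volume_real_Ioo_of_le ha2.le, smul_eq_mul,
        mul_comm] at this
    have hDpos := sphereD_pos (m := m) (α := α) hapos ha2 hb1
    have key : K * (b - a) ^ (e - 1) =
        (2 ^ (-e) * ((b - a) / b) ^ e) / (M * (b - a)) := by
      rw [Real.div_rpow hba.le hb0.le, Real.rpow_sub_one hba.ne', hKdef]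
      field_simp
    rw [key]
    exact div_le_div₀ (Real.rpow_nonneg hN0 p) hNp hDpos hD
  apply tendsto_atTop_mono' _ hbound
  have htend1 : Tendsto (fun a : ℝ => b - a) (nhdsWithin b (Set.Iio b)) (nhdsWithin 0 (Set.Ioi 0)) := by
    apply tendsto_nhdsWithin_of_tendsto_nhds_of_eventually_within
    · have : Tendsto (fun a : ℝ => b - a) (nhds b) (nhds (b - b)) :=
        (continuous_const.sub continuous_id).tendsto b
      simpa using this.mono_left nhdsWithin_le_nhds
    · filter_upwards [self_mem_nhdsWithin] with a (ha : a < b) using sub_pos.2 ha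
  have htend2 : Tendsto (fun s : ℝ => s ^ (1 - e)) (nhdsWithin 0 (Set.Ioi 0))
      (nhdsWithin 0 (Set.Ioi 0)) := by
    apply tendsto_nhdsWithin_of_tendsto_nhds_of_eventually_within
    · have h := (Real.continuousAt_rpow_const 0 (1 - e) (Or.inr (by linarith))).tendsto
      simpa [Real.zero_rpow (by linarith : (1:ℝ) - e ≠ 0)] using h.mono_left nhdsWithin_le_nhds
    · filter_upwards [self_mem_nhdsWithin] with s hs using Real.rpow_pos_of_pos hs _
  have htend3 : Tendsto (fun a : ℝ => ((b - a) ^ (1 - e))⁻¹) (nhdsWithin b (Set.Iio b)) atTop :=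
    tendsto_inv_nhdsGT_zero.comp (htend2.comp htend1)
  have htend4 : Tendsto (fun a : ℝ => (b - a) ^ (e - 1)) (nhdsWithin b (Set.Iio b)) atTop := by
    apply htend3.congr'
    filter_upwards [self_mem_nhdsWithin] with a (ha : a < b)
    rw [← Real.rpow_neg (by linarith : (0:ℝ) ≤ b - a)]
    norm_num
  exact htend4.const_mul_atTop hK
end

section
/- Let 1 < γ ≤ 3/2 and define ψ : (0, ∞) → [0, ∞) by ψ(x) = x^{-1} (log(1/x))^{-γ} for 0 < x < 1/8 and ψ(x) = 0 otherwise. Then ∫₀^∞ ψ(x) dx < ∞, but ∫₀^∞ (∫₀^x ψ(t) (x - t)^{-1/2} dt)² dx = ∞. -/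
open MeasureTheory Set ENNReal Filter

lemma aux_integrableOn (γ : ℝ) (hγ1 : 1 < γ) :
    IntegrableOn (fun x : ℝ => x⁻¹ * (-Real.log x) ^ (-γ)) (Ioo (0:ℝ) (1/8)) := by
  have hγ0 : γ - 1 ≠ 0 := sub_ne_zero.2 (ne_of_gt hγ1)
  set g : ℝ → ℝ := fun x => (γ - 1)⁻¹ * (-Real.log x) ^ (1 - γ) with hgdef
  have hg0 : g 0 = 0 := by
    simp [hgdef, Real.log_zero, Real.zero_rpow (by intro h; apply hγ0; linarith [sub_eq_zero.1 h] : (1:ℝ) - γ ≠ 0)]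
  have hcont : ContinuousOn g (Icc (0:ℝ) (1/8)) := by
    intro x hx
    rcases eq_or_lt_of_le hx.1 with h0 | h0
    · -- x = 0
      subst h0
      have T : Tendsto g (nhdsWithin 0 (Ioi (0:ℝ))) (nhds 0) := by
        have h1 : Tendsto (fun x : ℝ => -Real.log x) (nhdsWithin 0 (Ioi (0:ℝ))) atTop :=
          tendsto_neg_atTop_iff.2 Real.tendsto_log_nhdsGT_zero
        have h2 : Tendsto (fun u : ℝ => u ^ (1 - γ)) atTop (nhds 0) := by
          have := tendsto_rpow_neg_atTop (y := γ - 1) (by linarith)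
          simpa [neg_sub] using this
        simpa [hgdef] using (h2.comp h1).const_mul ((γ - 1)⁻¹)
      have : ContinuousWithinAt g (Ioi (0:ℝ)) 0 := by
        rw [ContinuousWithinAt, hg0]; exact T
      exact (this.insert).mono (by
        intro y hy
        rcases eq_or_lt_of_le hy.1 with h | h
        · exact mem_insert_iff.2 (Or.inl h.symm)
        · exact mem_insert_of_mem _ h)
    · have hlog : Real.log x < 0 := Real.log_neg h0 (by linarith [hx.2])
      have : ContinuousAt g x := by
        have h1 : ContinuousAt (fun y : ℝ => -Real.log y) x :=
          (Real.continuousAt_log (ne_of_gt h0)).neg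
        exact (h1.rpow_const (Or.inl (ne_of_gt (by linarith)))).const_mul _
      exact this.continuousWithinAt
  have hderiv : ∀ x ∈ Ioo (0:ℝ) (1/8),
      HasDerivAt g (x⁻¹ * (-Real.log x) ^ (-γ)) x := by
    intro x hx
    have hx0 : (0:ℝ) < x := hx.1
    have hlog : Real.log x < 0 := Real.log_neg hx0 (by linarith [hx.2])
    have h1 : HasDerivAt (fun y : ℝ => -Real.log y) (-x⁻¹) x :=
      (Real.hasDerivAt_log (ne_of_gt hx0)).neg
    have h2 := (h1.rpow_const (p := 1 - γ) (Or.inl (by linarith))).const_mul ((γ - 1)⁻¹)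
    refine h2.congr_deriv (Eq.symm ?_)
    have he : (1 : ℝ) - γ - 1 = -γ := by ring
    rw [he]
    field_simp
    ring
  have hpos : ∀ x ∈ Ioo (0:ℝ) (1/8), 0 ≤ x⁻¹ * (-Real.log x) ^ (-γ) := by
    intro x hx
    have : Real.log x < 0 := Real.log_neg hx.1 (by linarith [hx.2])
    exact mul_nonneg (inv_nonneg.2 hx.1.le) (Real.rpow_nonneg (by linarith) _)
  exact (intervalIntegral.integrableOn_deriv_of_nonneg hcont hderiv hpos).mono_set Ioo_subset_Ioc_self

lemma aux_diverge :
    (∫⁻ x in Ioo (0:ℝ) (1/8), ENNReal.ofReal (x⁻¹ * (-Real.log x)⁻¹)) = ⊤ := by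
  refine ENNReal.eq_top_of_forall_nnreal_le fun r => ?_
  have hlog8 : (0:ℝ) < Real.log 8 := Real.log_pos (by norm_num)
  set b : ℝ := Real.exp ((r:ℝ) + Real.log (Real.log 8) + 1) with hb
  set a : ℝ := Real.exp (-b) with ha
  have ha0 : 0 < a := Real.exp_pos _
  have hloga : Real.log a = -b := Real.log_exp _
  have hbgt : Real.log 8 < b := by
    conv_lhs => rw [← Real.exp_log hlog8]
    exact Real.exp_lt_exp.2 (by have := r.coe_nonneg; linarith)
  have ha8 : a < 1/8 := by
    rw [ha, show (1:ℝ)/8 = Real.exp (Real.log (1/8)) from (Real.exp_log (by norm_num)).symm]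
    apply Real.exp_lt_exp.2
    rw [one_div, Real.log_inv]
    linarith
  have hmem : ∀ x ∈ Icc a (1/8), 0 < x ∧ 0 < -Real.log x := by
    intro x hx
    have hx0 : 0 < x := lt_of_lt_of_le ha0 hx.1
    refine ⟨hx0, ?_⟩
    have : Real.log x ≤ Real.log (1/8) := Real.log_le_log hx0 hx.2
    rw [one_div, Real.log_inv] at this
    linarith
  set G : ℝ → ℝ := fun x => -Real.log (-Real.log x) with hG
  have hderiv : ∀ x ∈ Icc a (1/8), HasDerivAt G (x⁻¹ * (-Real.log x)⁻¹) x := by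
    intro x hx
    obtain ⟨hx0, hlx⟩ := hmem x hx
    have h1 : HasDerivAt (fun y : ℝ => -Real.log y) (-x⁻¹) x :=
      (Real.hasDerivAt_log (ne_of_gt hx0)).neg
    have h2 := (h1.log (ne_of_gt hlx)).neg
    refine h2.congr_deriv (Eq.symm ?_)
    field_simp
  have hc : ContinuousOn (fun x : ℝ => x⁻¹ * (-Real.log x)⁻¹) (Icc a (1/8)) := by
    intro x hx
    obtain ⟨hx0, hlx⟩ := hmem x hx
    exact ((continuousAt_inv₀ (ne_of_gt hx0)).mul
      ((Real.continuousAt_log (ne_of_gt hx0)).neg.inv₀ (ne_of_gt hlx))).continuousWithinAt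
  have hint : IntervalIntegrable (fun x : ℝ => x⁻¹ * (-Real.log x)⁻¹) volume a (1/8) := by
    apply ContinuousOn.intervalIntegrable
    rwa [uIcc_of_le ha8.le]
  have key : ∫ x in a..(1/8), x⁻¹ * (-Real.log x)⁻¹ = G (1/8) - G a :=
    intervalIntegral.integral_eq_sub_of_hasDerivAt
      (fun x hx => hderiv x (by rwa [uIcc_of_le ha8.le] at hx)) hint
  have hval : G (1/8) - G a = (r:ℝ) + 1 := by
    rw [hG]
    simp only []
    rw [show (1:ℝ)/8 = (8:ℝ)⁻¹ from one_div 8, Real.log_inv, neg_neg, hloga, neg_neg, hb,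
      Real.log_exp]
    ring
  have hIoo : IntegrableOn (fun x : ℝ => x⁻¹ * (-Real.log x)⁻¹) (Ioo a (1/8)) :=
    hint.1.mono_set Ioo_subset_Ioc_self
  have hnn : 0 ≤ᵐ[volume.restrict (Ioo a (1/8))] fun x : ℝ => x⁻¹ * (-Real.log x)⁻¹ := by
    refine (ae_restrict_iff' measurableSet_Ioo).2 (ae_of_all _ fun x hx => ?_)
    obtain ⟨hx0, hlx⟩ := hmem x ⟨hx.1.le, hx.2.le⟩
    positivity
  calc (r : ℝ≥0∞) = ENNReal.ofReal (r:ℝ) := ENNReal.ofReal_coe_nnreal.symm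
    _ ≤ ENNReal.ofReal (∫ x in Ioo a (1/8), x⁻¹ * (-Real.log x)⁻¹) := by
        apply ENNReal.ofReal_le_ofReal
        rw [← integral_Ioc_eq_integral_Ioo, ← intervalIntegral.integral_of_le ha8.le, key, hval]
        linarith
    _ = ∫⁻ x in Ioo a (1/8), ENNReal.ofReal (x⁻¹ * (-Real.log x)⁻¹) :=
        ofReal_integral_eq_lintegral_ofReal hIoo hnn
    _ ≤ ∫⁻ x in Ioo (0:ℝ) (1/8), ENNReal.ofReal (x⁻¹ * (-Real.log x)⁻¹) :=
        lintegral_mono_set (Ioo_subset_Ioo_left ha0.le)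

/-- For `1 < γ ≤ 3/2` and `ψ(x) = x⁻¹ (log (1/x))^{-γ}` on `(0, 1/8)` (and `0` elsewhere),
`ψ` is integrable on `(0, ∞)` but the square of its half-order Riemann–Liouville
fractional integral `I^{1/2}ψ(x) = ∫₀^x ψ(t) (x-t)^{-1/2} dt` is not. -/
theorem fractional_integral_half_not_L1_to_L2 (γ : ℝ) (hγ1 : 1 < γ) (hγ2 : γ ≤ 3 / 2)
    (ψ : ℝ → ℝ)
    (hψ : ψ = fun x => if 0 < x ∧ x < 1 / 8 then x⁻¹ * Real.log (1 / x) ^ (-γ) else 0) :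
    (∫⁻ x in Ioi (0 : ℝ), ENNReal.ofReal (ψ x)) < ⊤ ∧
    (∫⁻ x in Ioi (0 : ℝ),
        (∫⁻ t in Ioo (0 : ℝ) x, ENNReal.ofReal (ψ t * (x - t) ^ (-(1 : ℝ) / 2))) ^ 2) = ⊤ := by
  have hlog8 : (1:ℝ) < Real.log 8 := by
    rw [← Real.exp_lt_exp (x := 1), Real.exp_log (by norm_num)]
    calc Real.exp 1 < 2.7182818286 := Real.exp_one_lt_d9
      _ < 8 := by norm_num
  have hlog2 : (0:ℝ) < Real.log 2 := Real.log_pos (by norm_num)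
  have hlog8' : Real.log 8 = 3 * Real.log 2 := by
    rw [show (8:ℝ) = 2 ^ (3:ℕ) by norm_num, Real.log_pow]; push_cast; ring
  constructor
  · -- integrability
    have heq : ∀ x, ENNReal.ofReal (ψ x)
        = (Ioo (0:ℝ) (1/8)).indicator
            (fun x => ENNReal.ofReal (x⁻¹ * (-Real.log x) ^ (-γ))) x := by
      intro x
      by_cases h : 0 < x ∧ x < 1/8
      · rw [indicator_of_mem (mem_Ioo.2 h), hψ]
        show ENNReal.ofReal (if 0 < x ∧ x < 1/8 then x⁻¹ * Real.log (1/x) ^ (-γ) else 0) = _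
        rw [if_pos h, one_div, Real.log_inv]
      · rw [indicator_of_notMem (by simpa [mem_Ioo] using h), hψ]
        show ENNReal.ofReal (if 0 < x ∧ x < 1/8 then x⁻¹ * Real.log (1/x) ^ (-γ) else 0) = _
        rw [if_neg h, ENNReal.ofReal_zero]
    calc (∫⁻ x in Ioi (0:ℝ), ENNReal.ofReal (ψ x))
        = ∫⁻ x in Ioi (0:ℝ), (Ioo (0:ℝ) (1/8)).indicator
            (fun x => ENNReal.ofReal (x⁻¹ * (-Real.log x) ^ (-γ))) x := by simp_rw [heq]
      _ = ∫⁻ x in Ioo (0:ℝ) (1/8), ENNReal.ofReal (x⁻¹ * (-Real.log x) ^ (-γ)) := by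
          have hII : Ioo (0:ℝ) (1/8) ∩ Ioi 0 = Ioo (0:ℝ) (1/8) :=
            inter_eq_left.2 fun y (hy : y ∈ Ioo (0:ℝ) (1/8)) => hy.1
          rw [lintegral_indicator measurableSet_Ioo, Measure.restrict_restrict measurableSet_Ioo,
            hII]
      _ < ⊤ := (aux_integrableOn γ hγ1).lintegral_lt_top
  · -- divergence
    have key : ∀ x ∈ Ioo (0:ℝ) (1/8),
        ENNReal.ofReal ((1/32) * (x⁻¹ * (-Real.log x)⁻¹))
          ≤ (∫⁻ t in Ioo (0:ℝ) x, ENNReal.ofReal (ψ t * (x - t) ^ (-(1:ℝ)/2))) ^ 2 := by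
      intro x hx
      obtain ⟨hx0, hx8⟩ := hx
      set L : ℝ := -Real.log x with hL
      have hLgt : Real.log 8 < L := by
        have := Real.log_lt_log hx0 hx8
        rw [one_div, Real.log_inv] at this
        linarith
      have hL1 : (1:ℝ) < L := lt_trans hlog8 hLgt
      have hL0 : (0:ℝ) < L := by linarith
      have hsq : x^2 < x/2 := by nlinarith
      have hsq0 : (0:ℝ) < x^2 := by positivity
      set c : ℝ := x ^ (-(1:ℝ)/2) * (2*L) ^ (-γ) with hc
      have hc0 : 0 ≤ c := mul_nonneg (Real.rpow_nonneg hx0.le _) (Real.rpow_nonneg (by linarith) _)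
      -- pointwise bound on the inner integrand
      have hpt : ∀ t ∈ Ioo (x^2) (x/2),
          c * t⁻¹ ≤ ψ t * (x - t) ^ (-(1:ℝ)/2) := by
        intro t ht
        obtain ⟨ht1, ht2⟩ := ht
        have ht0 : (0:ℝ) < t := lt_trans hsq0 ht1
        have ht8 : t < 1/8 := by linarith
        have hxt : 0 < x - t := by linarith
        have hlt : (0:ℝ) < -Real.log t := by
          have : Real.log t < 0 := Real.log_neg ht0 (by linarith)
          linarith
        have hψt : ψ t = t⁻¹ * (-Real.log t) ^ (-γ) := by
          rw [hψ]
          show (if 0 < t ∧ t < 1/8 then t⁻¹ * Real.log (1/t) ^ (-γ) else 0) = _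
          rw [if_pos ⟨ht0, ht8⟩, one_div, Real.log_inv]
        have hA : x ^ (-(1:ℝ)/2) ≤ (x - t) ^ (-(1:ℝ)/2) :=
          Real.rpow_le_rpow_of_nonpos hxt (by linarith) (by norm_num)
        have hB : (2*L) ^ (-γ) ≤ (-Real.log t) ^ (-γ) := by
          apply Real.rpow_le_rpow_of_nonpos hlt _ (by linarith)
          have : Real.log (x^2) < Real.log t := Real.log_lt_log hsq0 ht1
          rw [Real.log_pow] at this
          push_cast at this
          linarith
        have hBt : (2*L) ^ (-γ) * t⁻¹ ≤ (-Real.log t) ^ (-γ) * t⁻¹ :=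
          mul_le_mul_of_nonneg_right hB (inv_nonneg.2 ht0.le)
        have step := mul_le_mul hA hBt
          (mul_nonneg (Real.rpow_nonneg (by linarith) _) (inv_nonneg.2 ht0.le))
          (Real.rpow_nonneg hxt.le _)
        calc c * t⁻¹ = x ^ (-(1:ℝ)/2) * ((2*L) ^ (-γ) * t⁻¹) := by rw [hc]; ring
          _ ≤ (x - t) ^ (-(1:ℝ)/2) * ((-Real.log t) ^ (-γ) * t⁻¹) := step
          _ = ψ t * (x - t) ^ (-(1:ℝ)/2) := by rw [hψt]; ring
      -- the real integral of the lower bound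
      have hIcc : ContinuousOn (fun t : ℝ => c * t⁻¹) (Icc (x^2) (x/2)) :=
        continuousOn_const.mul (continuousOn_id.inv₀ fun t ht => ne_of_gt (lt_of_lt_of_le hsq0 ht.1))
      have hIOn : IntegrableOn (fun t : ℝ => c * t⁻¹) (Ioo (x^2) (x/2)) :=
        (hIcc.integrableOn_Icc).mono_set Ioo_subset_Icc_self
      have hnn : 0 ≤ᵐ[volume.restrict (Ioo (x^2) (x/2))] fun t : ℝ => c * t⁻¹ := by
        refine (ae_restrict_iff' measurableSet_Ioo).2 (ae_of_all _ fun t ht => ?_)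
        have ht0 : (0:ℝ) < t := lt_trans hsq0 ht.1
        exact mul_nonneg hc0 (inv_nonneg.2 ht0.le)
      have hval : ∫ t in Ioo (x^2) (x/2), c * t⁻¹ = c * (L - Real.log 2) := by
        rw [← integral_Ioc_eq_integral_Ioo, ← intervalIntegral.integral_of_le hsq.le,
          intervalIntegral.integral_const_mul, integral_inv (by
            intro h
            rcases (mem_uIcc.1 h) with ⟨h1, _⟩ | ⟨_, h2⟩
            · exact absurd h1 (not_le.2 hsq0)
            · linarith)]
        congr 1
        rw [show x/2/(x^2) = (2*x)⁻¹ by field_simp, Real.log_inv,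
          Real.log_mul (by norm_num) (ne_of_gt hx0)]
        rw [hL]; ring
      -- lower bound for the inner lintegral
      have hq : ENNReal.ofReal (c * (L - Real.log 2))
          ≤ ∫⁻ t in Ioo (0:ℝ) x, ENNReal.ofReal (ψ t * (x - t) ^ (-(1:ℝ)/2)) := by
        calc ENNReal.ofReal (c * (L - Real.log 2))
            = ∫⁻ t in Ioo (x^2) (x/2), ENNReal.ofReal (c * t⁻¹) := by
              rw [← hval]; exact ofReal_integral_eq_lintegral_ofReal hIOn hnn
          _ ≤ ∫⁻ t in Ioo (x^2) (x/2), ENNReal.ofReal (ψ t * (x - t) ^ (-(1:ℝ)/2)) := by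
              refine lintegral_mono_ae ((ae_restrict_iff' measurableSet_Ioo).2
                (ae_of_all _ fun t ht => ?_))
              exact ENNReal.ofReal_le_ofReal (hpt t ht)
          _ ≤ ∫⁻ t in Ioo (0:ℝ) x, ENNReal.ofReal (ψ t * (x - t) ^ (-(1:ℝ)/2)) :=
              lintegral_mono_set (fun t ht => ⟨lt_trans hsq0 ht.1, by
                have := ht.2; simp only [mem_Ioo] at *; linarith⟩)
      -- now the real inequalities
      have hLhalf : L/2 ≤ L - Real.log 2 := by
        rw [hlog8'] at hLgt; linarith
      have hcl2 : (0:ℝ) ≤ c * (L - Real.log 2) := mul_nonneg hc0 (by linarith)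
      have hq2 : (1/32) * (x⁻¹ * L⁻¹) ≤ (c * (L - Real.log 2))^2 := by
        have h1 : c * (L/2) ≤ c * (L - Real.log 2) := mul_le_mul_of_nonneg_left hLhalf hc0
        have hcl0 : 0 ≤ c * (L/2) := mul_nonneg hc0 (by linarith)
        have hsq_le : (c * (L/2))^2 ≤ (c * (L - Real.log 2))^2 := by nlinarith
        refine le_trans ?_ hsq_le
        have h2L : ((2:ℝ)*L) ^ (-γ) = 2 ^ (-γ) * L ^ (-γ) :=
          Real.mul_rpow (by norm_num) hL0.le
        have hx2 : (x ^ (-(1:ℝ)/2))^2 = x⁻¹ := by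
          rw [← Real.rpow_natCast (x ^ (-(1:ℝ)/2)) 2, ← Real.rpow_mul hx0.le]
          norm_num [Real.rpow_neg_one]
        have hL2 : (L ^ (-γ))^2 * L^2 = L ^ (2 - 2*γ) := by
          rw [← Real.rpow_natCast (L ^ (-γ)) 2, ← Real.rpow_mul hL0.le,
            ← Real.rpow_natCast L 2, ← Real.rpow_add hL0]
          congr 1
          push_cast; ring
        have h22 : ((2:ℝ) ^ (-γ))^2 = 2 ^ (-(2*γ)) := by
          rw [← Real.rpow_natCast ((2:ℝ) ^ (-γ)) 2, ← Real.rpow_mul (by norm_num)]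
          congr 1
          push_cast; ring
        have hc2 : (c * (L/2))^2 = (2 ^ (-(2*γ)) / 4) * (x⁻¹ * L ^ (2 - 2*γ)) := by
          rw [hc, h2L,
            show (x ^ (-(1:ℝ)/2) * ((2:ℝ) ^ (-γ) * L ^ (-γ)) * (L/2))^2
              = ((2:ℝ)^(-γ))^2 / 4 * ((x ^ (-(1:ℝ)/2))^2 * ((L ^ (-γ))^2 * L^2)) from by ring,
            hx2, hL2, h22]
        have e1 : (1:ℝ)/8 ≤ 2 ^ (-(2*γ)) := by
          calc (1:ℝ)/8 = 2 ^ (-3:ℝ) := by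
                rw [show (-3:ℝ) = -((3:ℕ):ℝ) by norm_num, Real.rpow_neg (by norm_num),
                  Real.rpow_natCast]
                norm_num
            _ ≤ 2 ^ (-(2*γ)) :=
                Real.rpow_le_rpow_of_exponent_le (by norm_num) (by linarith)
        have e2 : L⁻¹ ≤ L ^ (2 - 2*γ) := by
          have := Real.rpow_le_rpow_of_exponent_le hL1.le (by linarith : (-1:ℝ) ≤ 2 - 2*γ)
          rwa [Real.rpow_neg_one] at this
        rw [hc2]
        exact mul_le_mul (by linarith)
          (mul_le_mul_of_nonneg_left e2 (inv_nonneg.2 hx0.le))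
          (mul_nonneg (inv_nonneg.2 hx0.le) (inv_nonneg.2 hL0.le))
          (by positivity)
      calc ENNReal.ofReal ((1/32) * (x⁻¹ * (-Real.log x)⁻¹))
          ≤ ENNReal.ofReal ((c * (L - Real.log 2))^2) := ENNReal.ofReal_le_ofReal (by rw [← hL]; exact hq2)
        _ = (ENNReal.ofReal (c * (L - Real.log 2)))^2 :=
            ENNReal.ofReal_pow hcl2 2
        _ ≤ (∫⁻ t in Ioo (0:ℝ) x, ENNReal.ofReal (ψ t * (x - t) ^ (-(1:ℝ)/2))) ^ 2 :=
            pow_le_pow_left' hq 2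
    -- assemble
    refine eq_top_iff.2 ?_
    calc (⊤:ℝ≥0∞) = ∫⁻ x in Ioo (0:ℝ) (1/8),
          ENNReal.ofReal ((1/32) * (x⁻¹ * (-Real.log x)⁻¹)) := by
          simp_rw [ENNReal.ofReal_mul (by norm_num : (0:ℝ) ≤ 1/32)]
          rw [lintegral_const_mul' _ _ ENNReal.ofReal_ne_top, aux_diverge,
            ENNReal.mul_top (by simp : ENNReal.ofReal (1/32) ≠ 0)]
      _ ≤ ∫⁻ x in Ioo (0:ℝ) (1/8),
            (∫⁻ t in Ioo (0:ℝ) x, ENNReal.ofReal (ψ t * (x - t) ^ (-(1:ℝ)/2))) ^ 2 :=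
          lintegral_mono_ae ((ae_restrict_iff' measurableSet_Ioo).2 (ae_of_all _ key))
      _ ≤ ∫⁻ x in Ioi (0:ℝ),
            (∫⁻ t in Ioo (0:ℝ) x, ENNReal.ofReal (ψ t * (x - t) ^ (-(1:ℝ)/2))) ^ 2 :=
          lintegral_mono_set (fun x hx => hx.1)
end
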